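/- arXiv:1305.7491 — 3 statements merged into one kernel-verified Lean document; each statement's English description precedes it below -/
import Mathlib

section
/- For every F ∈ dom S, the functions ΓF and Γ'F belong to ℓ²(X⁰,m⁰); more precisely, if a,b>0 are constants such that ‖f‖²_{L^∞(0,1)}+‖f'‖²_{L^∞(0,1)} ≤ a‖f''‖²_{L²(0,1)}+b‖f‖²_{L²(0,1)} for all f∈H²(0,1), then both ‖ΓF‖²_{ℓ²(X⁰,m⁰)} and ‖Γ'F‖²_{ℓ²(X⁰,m⁰)} are bounded by 2a‖F''‖²_{L²(X¹,m¹)}+2b‖F‖²_{L²(X¹,m¹)}. -/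
open MeasureTheory Set ENNReal

set_option linter.unusedSectionVars false

noncomputable section

/-- A weighted network: countable connected graph without loops or multiple edges,
equipped with positive conductances `c` satisfying `m⁰(x) = ∑_{y∼x} c(xy) < ∞`. -/
structure Network (V : Type) : Type where
  adj : V → V → Prop
  adj_symm : ∀ x y, adj x y → adj y x
  adj_irrefl : ∀ x, ¬ adj x x
  adj_connected : ∀ x y, Relation.ReflTransGen adj x y
  c : V → V → ℝ
  c_symm : ∀ x y, c x y = c y x
  c_pos : ∀ x y, adj x y → 0 < c x y
  c_eq_zero : ∀ x y, ¬ adj x y → c x y = 0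
  c_summable : ∀ x, Summable fun y => c x y

namespace Network

variable {V : Type} [Countable V] [MeasurableSpace V] [DiscreteMeasurableSpace V]

/-- The vertex weight `m⁰(x) = ∑_{y : y ∼ x} c(xy)`. -/
def m0 (N : Network V) (x : V) : ℝ := ∑' y, N.c x y

/-- The measure `m¹` on the metric graph `X¹`.  A point `((x,y),t)` represents the point
at distance `t ∈ (0,1)` from `x` on the edge `[x,y]`; each edge appears with both
orientations, whence the factor `1/2`. -/
def edgeMeasure (N : Network V) : Measure ((V × V) × ℝ) :=
  Measure.sum fun e : V × V =>
    Measure.map (fun t => (e, t))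
      ((ENNReal.ofReal (N.c e.1 e.2 / 2)) • (volume.restrict (Set.Ioo (0:ℝ) 1)))

/-- The identification `(xy,t) ≡ (yx,1-t)` of the two orientations of an edge. -/
def eFlip : (V × V) × ℝ → (V × V) × ℝ := fun p => ((p.1.2, p.1.1), 1 - p.2)

theorem measurable_eFlip : Measurable (eFlip (V := V)) := by
  apply Measurable.prod
  · exact ((measurable_snd.comp measurable_fst).prodMk (measurable_fst.comp measurable_fst))
  · exact measurable_const.sub measurable_snd

theorem measurePreserving_eFlip (N : Network V) :
    MeasurePreserving (eFlip (V := V)) N.edgeMeasure N.edgeMeasure := by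
  refine ⟨measurable_eFlip, ?_⟩
  ext s hs
  rw [Measure.map_apply measurable_eFlip hs, edgeMeasure,
    Measure.sum_apply _ (measurable_eFlip hs), Measure.sum_apply _ hs]
  have key : ∀ e : V × V,
      (Measure.map (fun t => (e, t))
        ((ENNReal.ofReal (N.c e.1 e.2 / 2)) • (volume.restrict (Set.Ioo (0:ℝ) 1))))
          (eFlip ⁻¹' s)
      = (Measure.map (fun t => ((e.2, e.1), t))
        ((ENNReal.ofReal (N.c e.2 e.1 / 2)) • (volume.restrict (Set.Ioo (0:ℝ) 1)))) s := by
    intro e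
    have hme : Measurable fun t : ℝ => (e, t) := measurable_prodMk_left
    have hme' : Measurable fun t : ℝ => ((e.2, e.1), t) := measurable_prodMk_left
    rw [Measure.map_apply hme (measurable_eFlip hs), Measure.map_apply hme' hs,
      Measure.smul_apply, Measure.smul_apply, N.c_symm e.1 e.2]
    congr 1
    have hpre : ((fun t : ℝ => (e, t)) ⁻¹' (eFlip ⁻¹' s))
        = (fun t : ℝ => 1 - t) ⁻¹' ((fun t : ℝ => ((e.2, e.1), t)) ⁻¹' s) := by
      ext t; simp [eFlip]
    rw [hpre]
    have hmp : MeasurePreserving (fun t : ℝ => 1 - t)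
        (volume.restrict (Set.Ioo (0:ℝ) 1)) (volume.restrict (Set.Ioo (0:ℝ) 1)) := by
      have h0 : MeasurePreserving (fun t : ℝ => 1 - t) volume volume :=
        Measure.measurePreserving_sub_left volume 1
      have h1 := h0.restrict_preimage (s := Set.Ioo (0:ℝ) 1) measurableSet_Ioo
      have h2 : (fun t : ℝ => 1 - t) ⁻¹' (Set.Ioo (0:ℝ) 1) = Set.Ioo (0:ℝ) 1 := by
        ext t; constructor <;> (intro ht; simp only [Set.mem_preimage, Set.mem_Ioo] at *; constructor <;> linarith [ht.1, ht.2])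
      rwa [h2] at h1
    exact (hmp.measure_preimage ((hme' hs).nullMeasurableSet)).symm ▸ rfl
  calc
    (∑' e : V × V,
        (Measure.map (fun t => (e, t))
          ((ENNReal.ofReal (N.c e.1 e.2 / 2)) • (volume.restrict (Set.Ioo (0:ℝ) 1))))
            (eFlip ⁻¹' s))
        = ∑' e : V × V,
          (Measure.map (fun t => ((e.2, e.1), t))
            ((ENNReal.ofReal (N.c e.2 e.1 / 2)) • (volume.restrict (Set.Ioo (0:ℝ) 1)))) s :=
      tsum_congr key
    _ = ∑' e : V × V,
          (Measure.map (fun t => (e, t))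
            ((ENNReal.ofReal (N.c e.1 e.2 / 2)) • (volume.restrict (Set.Ioo (0:ℝ) 1)))) s :=
      (Equiv.prodComm V V).tsum_eq fun e =>
        (Measure.map (fun t => (e, t))
          ((ENNReal.ofReal (N.c e.1 e.2 / 2)) • (volume.restrict (Set.Ioo (0:ℝ) 1)))) s

/-- The continuous linear map `F ↦ F ∘ σ` induced by the edge-orientation flip. -/
def flipOp (N : Network V) : Lp ℂ 2 N.edgeMeasure →L[ℂ] Lp ℂ 2 N.edgeMeasure :=
  (Lp.compMeasurePreservingₗᵢ (E := ℂ) (p := 2) ℂ (eFlip (V := V))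
    N.measurePreserving_eFlip).toContinuousLinearMap

/-- The Hilbert space `L²(X¹, m¹)` of square-integrable functions on the metric graph,
realized as the subspace of `L²` functions on oriented edges which are compatible with
the identification `(xy,t) ≡ (yx, 1-t)`. -/
def L2X (N : Network V) : Submodule ℂ (Lp ℂ 2 N.edgeMeasure) :=
  LinearMap.ker ((N.flipOp - ContinuousLinearMap.id ℂ (Lp ℂ 2 N.edgeMeasure) :
    Lp ℂ 2 N.edgeMeasure →L[ℂ] Lp ℂ 2 N.edgeMeasure) : Lp ℂ 2 N.edgeMeasure →ₗ[ℂ] Lp ℂ 2 N.edgeMeasure)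

theorem isClosed_L2X (N : Network V) : IsClosed (N.L2X : Set (Lp ℂ 2 N.edgeMeasure)) :=
  ContinuousLinearMap.isClosed_ker (N.flipOp - ContinuousLinearMap.id ℂ (Lp ℂ 2 N.edgeMeasure))

instance (N : Network V) : CompleteSpace N.L2X :=
  (isClosed_L2X N).completeSpace_coe

end Network

namespace Network

variable {V : Type} [Countable V] [MeasurableSpace V] [DiscreteMeasurableSpace V]

/-- The value of (a representative of) `F ∈ L²(X¹,m¹)` at the point of the edge `[x,y]`
at distance `t` from `x`. -/
def edgeFun (N : Network V) (F : Lp ℂ 2 N.edgeMeasure) (x y : V) (t : ℝ) : ℂ :=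
  F ((x, y), t)

/-- The counting measure on vertices weighted by `m⁰`; `ℓ²(X⁰,m⁰) = Lp ℂ 2 N.vertexMeasure`. -/
def vertexMeasure (N : Network V) : Measure V :=
  Measure.sum fun x => (ENNReal.ofReal (N.m0 x)) • Measure.dirac x

/-- The averaging operator, at the level of functions. -/
def avgFun (N : Network V) (f : V → V → ℝ → ℂ) (x y : V) (t : ℝ) : ℂ :=
  (N.m0 x : ℂ)⁻¹ * (∑' u, (N.c x u : ℂ) * (∫ s in (0:ℝ)..(1 - t), f x u s))
    + (N.m0 y : ℂ)⁻¹ * (∑' v, (N.c y v : ℂ) * (∫ s in (0:ℝ)..t, f y v s))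

/-- `f, g, h` are (continuous versions of) an element of `Ĥ²(X¹,m¹)` together with its first
and second edgewise derivatives: on each edge, `g` is the derivative of `f` and `h` the
derivative of `g` (in the sense of absolutely continuous functions, via the fundamental
theorem of calculus), and `f`, `g`, `h` are square-integrable on the metric graph. -/
structure IsH2Rep (N : Network V) (f g h : V → V → ℝ → ℂ) : Prop where
  ftc₁ : ∀ x y, N.adj x y → ∀ t ∈ Set.Icc (0:ℝ) 1,
    f x y t = f x y 0 + ∫ s in (0:ℝ)..t, g x y s
  ftc₂ : ∀ x y, N.adj x y → ∀ t ∈ Set.Icc (0:ℝ) 1,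
    g x y t = g x y 0 + ∫ s in (0:ℝ)..t, h x y s
  intervalIntegrable_g : ∀ x y, N.adj x y → IntervalIntegrable (g x y) volume 0 1
  intervalIntegrable_h : ∀ x y, N.adj x y → IntervalIntegrable (h x y) volume 0 1
  memL2_f : MemLp (fun p : (V × V) × ℝ => f p.1.1 p.1.2 p.2) 2 N.edgeMeasure
  memL2_g : MemLp (fun p : (V × V) × ℝ => g p.1.1 p.1.2 p.2) 2 N.edgeMeasure
  memL2_h : MemLp (fun p : (V × V) × ℝ => h p.1.1 p.1.2 p.2) 2 N.edgeMeasure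

/-- The graph of the operator `S = -d²/dt²` with domain the functions in `Ĥ²(X¹,m¹)` which are
continuous at the vertices: `(F, G) ∈ graph S` iff `F` has an edgewise `H²` representative
`f` (with derivatives `g`, `h`), `f` is continuous at each vertex, and `G = -f''`. -/
def SGraph (N : Network V) (F G : N.L2X) : Prop :=
  ∃ f g h : V → V → ℝ → ℂ, N.IsH2Rep f g h ∧
    (⇑(F : Lp ℂ 2 N.edgeMeasure) =ᵐ[N.edgeMeasure] fun p => f p.1.1 p.1.2 p.2) ∧
    (∀ x u v, N.adj x u → N.adj x v → f x u 0 = f x v 0) ∧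
    (⇑(G : Lp ℂ 2 N.edgeMeasure) =ᵐ[N.edgeMeasure] fun p => -(h p.1.1 p.1.2 p.2))

/-- The graph of the (Kirchhoff) Laplacian `L`: the restriction of `S` to the functions
satisfying moreover `F'(x) = ∑_{y∼x} c(xy) F'(xy,0+) = 0` at every vertex `x`. -/
def LGraph (N : Network V) (F G : N.L2X) : Prop :=
  ∃ f g h : V → V → ℝ → ℂ, N.IsH2Rep f g h ∧
    (⇑(F : Lp ℂ 2 N.edgeMeasure) =ᵐ[N.edgeMeasure] fun p => f p.1.1 p.1.2 p.2) ∧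
    (∀ x u v, N.adj x u → N.adj x v → f x u 0 = f x v 0) ∧
    (∀ x, Summable fun y => (N.c x y : ℂ) * g x y 0) ∧
    (∀ x, ∑' y, (N.c x y : ℂ) * g x y 0 = 0) ∧
    (⇑(G : Lp ℂ 2 N.edgeMeasure) =ᵐ[N.edgeMeasure] fun p => -(h p.1.1 p.1.2 p.2))

end Network

/-- The graph of the adjoint of a densely defined operator, described by its graph `T`:
`(G,K) ∈ graph T*` iff `⟪G, SF⟫ = ⟪K, F⟫` for all `(F, SF) ∈ T`. -/
def adjointGraph {H : Type*} [NormedAddCommGroup H] [InnerProductSpace ℂ H]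
    (T : Set (H × H)) : Set (H × H) :=
  {q | ∀ p ∈ T, (inner ℂ q.1 p.2 : ℂ) = inner ℂ q.2 p.1}

/-- A densely defined operator given by its graph `T` is self-adjoint if `T* = T`. -/
def IsSelfAdjointGraph {H : Type*} [NormedAddCommGroup H] [InnerProductSpace ℂ H]
    (T : Set (H × H)) : Prop :=
  Dense (Prod.fst '' T) ∧ adjointGraph T = T

/-- The entire function `Φ(z,t) = t` for `z = 0` and `sin(zt)/z` otherwise. -/
def Phi (z : ℂ) (t : ℝ) : ℂ := if z = 0 then (t : ℂ) else Complex.sin (z * t) / z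

namespace Network

variable {V : Type} [Countable V] [MeasurableSpace V] [DiscreteMeasurableSpace V]

/-- Iterated forward extension step for the d'Alembert extension: `fwdExt f n x y s`
represents `F̃(xy, s + n)` for `s ∈ (0,1]`. -/
def fwdExt (N : Network V) (f : V → V → ℝ → ℂ) : ℕ → V → V → ℝ → ℂ
  | 0 => f
  | (n+1) => fun x y s =>
      (2 / (N.m0 y) : ℂ) * ∑' v, (N.c y v : ℂ) * N.fwdExt f n y v s - N.fwdExt f n y x s

/-- Iterated backward extension step for the d'Alembert extension: `bwdExt f n x y s`
represents `F̃(xy, s - n)` for `s ∈ [0,1)`. -/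
def bwdExt (N : Network V) (f : V → V → ℝ → ℂ) : ℕ → V → V → ℝ → ℂ
  | 0 => f
  | (n+1) => fun x y s =>
      (2 / (N.m0 x) : ℂ) * ∑' u, (N.c x u : ℂ) * N.bwdExt f n u x s - N.bwdExt f n y x s

/-- The d'Alembert extension `F̃` of a function `F` on the metric graph: each edge component
`t ↦ F(xy,t)`, `t ∈ [0,1]`, is extended to the whole real line by the recursion
`F̃(xy,t) = (2/m⁰(y)) ∑_{v∼y} c(yv) F̃(yv,t-1) - F̃(yx,t-1)` for `t > 1` and
`F̃(xy,t) = (2/m⁰(x)) ∑_{u∼x} c(ux) F̃(ux,t+1) - F̃(yx,t+1)` for `t < 0`. -/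
def tilde (N : Network V) (f : V → V → ℝ → ℂ) (x y : V) (t : ℝ) : ℂ :=
  if 0 ≤ t ∧ t ≤ 1 then f x y t
  else if 1 < t then N.fwdExt f (⌈t⌉ - 1).toNat x y (t - ((⌈t⌉ - 1 : ℤ) : ℝ))
  else N.bwdExt f (-⌊t⌋).toNat x y (t + ((-⌊t⌋ : ℤ) : ℝ))

/-- The d'Alembert operator `C(τ)` at the level of functions. -/
def dAlembertFun (N : Network V) (f : V → V → ℝ → ℂ) (τ : ℝ) (x y : V) (t : ℝ) : ℂ :=
  (N.tilde f x y (t + τ) + N.tilde f x y (t - τ)) / 2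

/-- The squared norm `‖g‖²_{L²(X¹,m¹)} = (1/2) ∑_x ∑_{y} c(xy) ∫₀¹ |g(xy,t)|² dt`
(with values in `ℝ≥0∞`). -/
def normSq (N : Network V) (g : V → V → ℝ → ℂ) : ℝ≥0∞ :=
  (1/2 : ℝ≥0∞) * ∑' x, ∑' y, ENNReal.ofReal (N.c x y) *
    ∫⁻ t in Set.Ioo (0:ℝ) 1, ((‖g x y t‖₊ : ℝ≥0∞) ^ 2)

end Network

namespace Network

/-- The squared `L²(X¹,m¹)`-norm, `‖g‖² = (1/2) ∑_x ∑_y c(xy) ∫₀¹ ‖g(xy,t)‖² dt`. -/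
def normSqR {V : Type} (N : Network V) (g : V → V → ℝ → ℂ) : ℝ :=
  (1/2 : ℝ) * ∑' x, ∑' y, N.c x y * ∫ t in (0:ℝ)..1, ‖g x y t‖^2

/-- The squared `ℓ²(X⁰,m⁰)`-norm, `‖φ‖² = ∑_x m⁰(x) ‖φ(x)‖²`. -/
def vertexNormSqR {V : Type} (N : Network V) (φ : V → ℂ) : ℝ :=
  ∑' x, N.m0 x * ‖φ x‖^2

end Network


namespace Network

variable {V : Type} [Countable V] [MeasurableSpace V] [DiscreteMeasurableSpace V]

lemma lintegral_edgeMeasure' (N : Network V) (P : (V × V) × ℝ → ℂ)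
    (hP : AEStronglyMeasurable P N.edgeMeasure) :
    ∫⁻ p, ((‖P p‖₊ : ℝ≥0∞) ^ 2) ∂N.edgeMeasure
      = ∑' x : V, ∑' y : V, ENNReal.ofReal (N.c x y / 2)
          * ∫⁻ t in Set.Ioo (0:ℝ) 1, ((‖P ((x,y),t)‖₊ : ℝ≥0∞) ^ 2) := by
  rw [edgeMeasure, lintegral_sum_measure, ← ENNReal.tsum_prod]
  refine tsum_congr fun e => ?_
  have hcomp : AEStronglyMeasurable P
      (Measure.map (fun t => (e, t))
        ((ENNReal.ofReal (N.c e.1 e.2 / 2)) • (volume.restrict (Set.Ioo (0:ℝ) 1)))) :=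
    hP.mono_measure (by rw [edgeMeasure]; exact Measure.le_sum _ e)
  have h1 : AEMeasurable (fun p => ((‖P p‖₊ : ℝ≥0∞) ^ 2))
      (Measure.map (fun t => (e, t))
        ((ENNReal.ofReal (N.c e.1 e.2 / 2)) • (volume.restrict (Set.Ioo (0:ℝ) 1)))) :=
    hcomp.nnnorm.aemeasurable.coe_nnreal_ennreal.pow_const 2
  rw [lintegral_map' h1 measurable_prodMk_left.aemeasurable, lintegral_smul_measure, smul_eq_mul]

lemma edge_aestronglyMeasurable' (N : Network V) (P : (V × V) × ℝ → ℂ)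
    (hP : AEStronglyMeasurable P N.edgeMeasure) {x y : V} (hxy : N.adj x y) :
    AEStronglyMeasurable (fun t => P ((x,y),t)) (volume.restrict (Set.Ioo (0:ℝ) 1)) := by
  have hcomp : AEStronglyMeasurable P
      (Measure.map (fun t : ℝ => ((x,y), t))
        ((ENNReal.ofReal (N.c x y / 2)) • (volume.restrict (Set.Ioo (0:ℝ) 1)))) :=
    hP.mono_measure (by rw [edgeMeasure]; exact Measure.le_sum _ (x,y))
  have h2 : AEStronglyMeasurable (fun t => P ((x,y),t))
      ((ENNReal.ofReal (N.c x y / 2)) • (volume.restrict (Set.Ioo (0:ℝ) 1))) :=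
    hcomp.comp_aemeasurable measurable_prodMk_left.aemeasurable
  obtain ⟨q, hq, heq⟩ := h2
  have hc : ENNReal.ofReal (N.c x y / 2) ≠ 0 := by
    simp only [ne_eq, ENNReal.ofReal_eq_zero, not_le]
    linarith [N.c_pos x y hxy]
  rw [Filter.EventuallyEq, ae_iff, Measure.smul_apply, smul_eq_mul, mul_eq_zero] at heq
  exact ⟨q, hq, ae_iff.2 (heq.resolve_left hc)⟩

lemma memL2_lintegral_ne_top' (N : Network V) (P : (V × V) × ℝ → ℂ)
    (hP : MemLp P 2 N.edgeMeasure) :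
    ∫⁻ p, ((‖P p‖₊ : ℝ≥0∞) ^ 2) ∂N.edgeMeasure ≠ ⊤ := by
  have h := hP.2
  rw [eLpNorm_eq_lintegral_rpow_enorm_toReal (by norm_num) (by norm_num)] at h
  simp only [ENNReal.toReal_ofNat, enorm_eq_nnnorm] at h
  have h2 : (∫⁻ p, ((‖P p‖₊ : ℝ≥0∞) ^ (2:ℝ)) ∂N.edgeMeasure) ≠ ⊤ := by
    intro htop
    rw [htop] at h
    simp [ENNReal.top_rpow_of_pos] at h
  rw [show ((2:ℝ)) = ((2:ℕ):ℝ) by norm_num] at h2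
  simpa [ENNReal.rpow_natCast] using h2

/-- The `ℝ≥0∞`-valued squared `L²`-norm of an edge component, with weight `c(xy)/2`. -/
def eL (N : Network V) (f : V → V → ℝ → ℂ) (x y : V) : ℝ≥0∞ :=
  ENNReal.ofReal (N.c x y / 2) * ∫⁻ t in Set.Ioo (0:ℝ) 1, ((‖f x y t‖₊ : ℝ≥0∞) ^ 2)

lemma eL_tsum_ne_top (N : Network V) (f : V → V → ℝ → ℂ)
    (hmem : MemLp (fun p : (V × V) × ℝ => f p.1.1 p.1.2 p.2) 2 N.edgeMeasure) :
    ∑' x, ∑' y, N.eL f x y ≠ ⊤ := by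
  have h1 := N.memL2_lintegral_ne_top' _ hmem
  rw [N.lintegral_edgeMeasure' _ hmem.1] at h1
  exact h1

lemma eL_ne_top (N : Network V) (f : V → V → ℝ → ℂ)
    (hmem : MemLp (fun p : (V × V) × ℝ => f p.1.1 p.1.2 p.2) 2 N.edgeMeasure) (x y : V) :
    N.eL f x y ≠ ⊤ :=
  ne_top_of_le_ne_top (N.eL_tsum_ne_top f hmem)
    (le_trans (ENNReal.le_tsum y) (ENNReal.le_tsum (f := fun x => ∑' y, N.eL f x y) x))

lemma eL_inner_ne_top (N : Network V) (f : V → V → ℝ → ℂ)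
    (hmem : MemLp (fun p : (V × V) × ℝ => f p.1.1 p.1.2 p.2) 2 N.edgeMeasure) (x : V) :
    ∑' y, N.eL f x y ≠ ⊤ :=
  ne_top_of_le_ne_top (N.eL_tsum_ne_top f hmem)
    (ENNReal.le_tsum (f := fun x => ∑' y, N.eL f x y) x)

lemma integral_sq_eq_toReal' (q : ℝ → ℂ)
    (hq : AEStronglyMeasurable q (volume.restrict (Set.Ioo (0:ℝ) 1))) :
    ∫ t in (0:ℝ)..1, ‖q t‖ ^ 2
      = (∫⁻ t in Set.Ioo (0:ℝ) 1, ((‖q t‖₊ : ℝ≥0∞) ^ 2)).toReal := by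
  rw [intervalIntegral.integral_of_le zero_le_one,
    ← Measure.restrict_congr_set Ioo_ae_eq_Ioc,
    integral_eq_lintegral_of_nonneg_ae (ae_of_all _ fun t => sq_nonneg ‖q t‖)
      ((hq.norm.aemeasurable.pow_const 2).aestronglyMeasurable)]
  congr 1
  refine lintegral_congr fun t => ?_
  rw [← enorm_eq_nnnorm, ← ofReal_norm, ← ENNReal.ofReal_pow (norm_nonneg _)]

lemma eL_toReal (N : Network V) (f : V → V → ℝ → ℂ)
    (hmem : MemLp (fun p : (V × V) × ℝ => f p.1.1 p.1.2 p.2) 2 N.edgeMeasure) (x y : V) :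
    (N.eL f x y).toReal = N.c x y / 2 * ∫ t in (0:ℝ)..1, ‖f x y t‖ ^ 2 := by
  by_cases hxy : N.adj x y
  · have hc2 : (0:ℝ) ≤ N.c x y / 2 := by linarith [N.c_pos x y hxy]
    have hc0' : ENNReal.ofReal (N.c x y / 2) ≠ 0 := by
      simp only [ne_eq, ENNReal.ofReal_eq_zero, not_le]
      linarith [N.c_pos x y hxy]
    have hJ : (∫⁻ t in Set.Ioo (0:ℝ) 1, ((‖f x y t‖₊ : ℝ≥0∞) ^ 2)) ≠ ⊤ := by
      intro htop
      apply N.eL_ne_top f hmem x y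
      rw [eL, htop, ENNReal.mul_top hc0']
    rw [eL, ENNReal.toReal_mul, ENNReal.toReal_ofReal hc2,
      Network.integral_sq_eq_toReal' (f x y) (N.edge_aestronglyMeasurable' _ hmem.1 hxy)]
  · simp [eL, N.c_eq_zero x y hxy, intervalIntegral.integral_of_le]

lemma eL_summable_inner (N : Network V) (f : V → V → ℝ → ℂ)
    (hmem : MemLp (fun p : (V × V) × ℝ => f p.1.1 p.1.2 p.2) 2 N.edgeMeasure) (x : V) :
    Summable fun y => (N.eL f x y).toReal :=
  ENNReal.summable_toReal (N.eL_inner_ne_top f hmem x)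

lemma eL_summable_outer (N : Network V) (f : V → V → ℝ → ℂ)
    (hmem : MemLp (fun p : (V × V) × ℝ => f p.1.1 p.1.2 p.2) 2 N.edgeMeasure) :
    Summable fun x => ∑' y, (N.eL f x y).toReal :=
  (ENNReal.summable_toReal (N.eL_tsum_ne_top f hmem)).congr fun x =>
    ENNReal.tsum_toReal_eq fun y => N.eL_ne_top f hmem x y

lemma normSqR_eq_tsum_eL (N : Network V) (f : V → V → ℝ → ℂ)
    (hmem : MemLp (fun p : (V × V) × ℝ => f p.1.1 p.1.2 p.2) 2 N.edgeMeasure) :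
    N.normSqR f = ∑' x, ∑' y, (N.eL f x y).toReal := by
  rw [Network.normSqR, ← tsum_mul_left]
  refine tsum_congr fun x => ?_
  rw [← tsum_mul_left]
  refine tsum_congr fun y => ?_
  rw [N.eL_toReal f hmem x y]
  ring

end Network

lemma tsum_cauchy_schwarz' {ι : Type*} [Countable ι] (u w : ι → ℝ) (hu : ∀ i, 0 ≤ u i)
    (hw : ∀ i, 0 ≤ w i) (h1 : Summable u) (h2 : Summable fun i => u i * w i ^ 2) :
    (∑' i, u i * w i) ^ 2 ≤ (∑' i, u i) * ∑' i, u i * w i ^ 2 := by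
  have hM : 0 ≤ (∑' i, u i) * ∑' i, u i * w i ^ 2 :=
    mul_nonneg (tsum_nonneg hu)
      (tsum_nonneg fun i => mul_nonneg (hu i) (sq_nonneg _))
  have hsum : Summable fun i => u i * w i := by
    refine Summable.of_nonneg_of_le (fun i => mul_nonneg (hu i) (hw i)) (fun i => ?_)
      ((h1.add h2).div_const 2)
    have : u i * w i * 2 ≤ u i + u i * w i ^ 2 := by
      nlinarith [mul_nonneg (hu i) (sq_nonneg (w i - 1))]
    linarith
  have key : ∑' i, u i * w i ≤ Real.sqrt ((∑' i, u i) * ∑' i, u i * w i ^ 2) := by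
    refine Summable.tsum_le_of_sum_le hsum fun s => ?_
    rw [Real.le_sqrt (Finset.sum_nonneg fun i _ => mul_nonneg (hu i) (hw i)) hM]
    calc (∑ i ∈ s, u i * w i) ^ 2
        = (∑ i ∈ s, Real.sqrt (u i) * (Real.sqrt (u i) * w i)) ^ 2 := by
          refine congrArg (· ^ 2) (Finset.sum_congr rfl fun i _ => ?_)
          rw [← mul_assoc, Real.mul_self_sqrt (hu i)]
      _ ≤ (∑ i ∈ s, Real.sqrt (u i) ^ 2) * ∑ i ∈ s, (Real.sqrt (u i) * w i) ^ 2 :=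
          Finset.sum_mul_sq_le_sq_mul_sq s _ _
      _ ≤ (∑' i, u i) * ∑' i, u i * w i ^ 2 := by
          refine mul_le_mul ?_ ?_ (Finset.sum_nonneg fun i _ => sq_nonneg _) (tsum_nonneg hu)
          · refine (Summable.sum_le_tsum s (fun i _ => hu i) h1).trans_eq' ?_
            exact Finset.sum_congr rfl fun i _ => (Real.sq_sqrt (hu i)).symm
          · refine (Summable.sum_le_tsum s (fun i _ => mul_nonneg (hu i) (sq_nonneg _)) h2).trans_eq' ?_
            refine Finset.sum_congr rfl fun i _ => ?_
            rw [mul_pow, Real.sq_sqrt (hu i)]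
  calc (∑' i, u i * w i) ^ 2 ≤ Real.sqrt ((∑' i, u i) * ∑' i, u i * w i ^ 2) ^ 2 :=
        pow_le_pow_left₀ (tsum_nonneg fun i => mul_nonneg (hu i) (hw i)) key 2
    _ = _ := Real.sq_sqrt hM

/-- For every `F ∈ dom S`, the functions `ΓF` and `Γ'F` belong to
`ℓ²(X⁰,m⁰)`; more precisely, if `a, b > 0` are constants such that
`‖f‖²_∞ + ‖f'‖²_∞ ≤ a ‖f''‖²_{L²(0,1)} + b ‖f‖²_{L²(0,1)}` for all `f ∈ H²(0,1)`, then both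
`‖ΓF‖²_{ℓ²(X⁰,m⁰)}` and `‖Γ'F‖²_{ℓ²(X⁰,m⁰)}` are bounded by
`2a ‖F''‖²_{L²(X¹,m¹)} + 2b ‖F‖²_{L²(X¹,m¹)}`.  Here `F` is described by an edgewise-`H²`
representative `f` with derivatives `g, h` which is continuous at the vertices,
`(ΓF)(x) = F(x) = φ(x)` is the common vertex value, and
`(Γ'F)(x) = (1/m⁰(x)) ∑_{y∼x} c(xy) F'(xy,0+)`. -/
theorem Gamma_maps_into_l2
    {V : Type} [Countable V] [MeasurableSpace V] [DiscreteMeasurableSpace V]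
    (N : Network V) (a b : ℝ) (ha : 0 < a) (hb : 0 < b)
    (hSob : ∀ f g h : ℝ → ℂ,
      (∀ t ∈ Set.Icc (0:ℝ) 1, f t = f 0 + ∫ s in (0:ℝ)..t, g s) →
      (∀ t ∈ Set.Icc (0:ℝ) 1, g t = g 0 + ∫ s in (0:ℝ)..t, h s) →
      IntervalIntegrable g volume 0 1 → IntervalIntegrable h volume 0 1 →
      ∀ t ∈ Set.Icc (0:ℝ) 1,
        ‖f t‖^2 + ‖g t‖^2
          ≤ a * (∫ s in (0:ℝ)..1, ‖h s‖^2) + b * ∫ s in (0:ℝ)..1, ‖f s‖^2)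
    (f g h : V → V → ℝ → ℂ) (hrep : N.IsH2Rep f g h)
    (hcont : ∀ x u v, N.adj x u → N.adj x v → f x u 0 = f x v 0)
    (φ : V → ℂ) (hφ : ∀ x y, N.adj x y → φ x = f x y 0)
    (hφ0 : ∀ x, (∀ y, ¬ N.adj x y) → φ x = 0) :
    (Summable fun x => N.m0 x * ‖φ x‖^2) ∧
    N.vertexNormSqR φ ≤ 2*a * N.normSqR h + 2*b * N.normSqR f ∧
    (∀ x, Summable fun y => N.c x y * ‖g x y 0‖) ∧
    (Summable fun x => N.m0 x * ‖(N.m0 x : ℂ)⁻¹ * ∑' y, (N.c x y : ℂ) * g x y 0‖^2) ∧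
    N.vertexNormSqR (fun x => (N.m0 x : ℂ)⁻¹ * ∑' y, (N.c x y : ℂ) * g x y 0)
      ≤ 2*a * N.normSqR h + 2*b * N.normSqR f := by
  classical
  have hc0 : ∀ x y, 0 ≤ N.c x y := fun x y => by
    by_cases hxy : N.adj x y
    · exact (N.c_pos x y hxy).le
    · exact le_of_eq (N.c_eq_zero x y hxy).symm
  have hm0 : ∀ x, 0 ≤ N.m0 x := fun x => tsum_nonneg (hc0 x)
  have hmemf := hrep.memL2_f
  have hmemh := hrep.memL2_h
  -- the edgewise Sobolev bound at `t = 0`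
  have hEbound : ∀ x y, N.adj x y → ‖f x y 0‖ ^ 2 + ‖g x y 0‖ ^ 2
      ≤ a * (∫ s in (0:ℝ)..1, ‖h x y s‖ ^ 2) + b * ∫ s in (0:ℝ)..1, ‖f x y s‖ ^ 2 :=
    fun x y hxy => hSob (f x y) (g x y) (h x y) (hrep.ftc₁ x y hxy) (hrep.ftc₂ x y hxy)
      (hrep.intervalIntegrable_g x y hxy) (hrep.intervalIntegrable_h x y hxy) 0
      ⟨le_refl 0, zero_le_one⟩
  -- the real-valued summable majorant
  set wr : V → V → ℝ := fun x y =>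
    2 * a * (N.eL h x y).toReal + 2 * b * (N.eL f x y).toReal with hwrdef
  have hwr0 : ∀ x y, 0 ≤ wr x y := fun x y =>
    add_nonneg (mul_nonneg (by linarith) ENNReal.toReal_nonneg)
      (mul_nonneg (by linarith) ENNReal.toReal_nonneg)
  have hwrSummable : ∀ x, Summable fun y => wr x y := fun x =>
    ((N.eL_summable_inner h hmemh x).mul_left _).add
      ((N.eL_summable_inner f hmemf x).mul_left _)
  set T : V → ℝ := fun x => ∑' y, wr x y with hTdef
  have hT0 : ∀ x, 0 ≤ T x := fun x => tsum_nonneg (hwr0 x)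
  have hTx : ∀ x, T x = 2 * a * (∑' y, (N.eL h x y).toReal)
      + 2 * b * (∑' y, (N.eL f x y).toReal) := by
    intro x
    simp only [hTdef, hwrdef]
    rw [Summable.tsum_add ((N.eL_summable_inner h hmemh x).mul_left _)
      ((N.eL_summable_inner f hmemf x).mul_left _), tsum_mul_left, tsum_mul_left]
  have hTsum : Summable T :=
    (((N.eL_summable_outer h hmemh).mul_left (2*a)).add
      ((N.eL_summable_outer f hmemf).mul_left (2*b))).congr fun x => (hTx x).symm
  have hTval : ∑' x, T x = 2 * a * N.normSqR h + 2 * b * N.normSqR f := by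
    calc ∑' x, T x
        = ∑' x, (2 * a * (∑' y, (N.eL h x y).toReal)
            + 2 * b * (∑' y, (N.eL f x y).toReal)) := tsum_congr hTx
      _ = 2 * a * (∑' x, ∑' y, (N.eL h x y).toReal)
            + 2 * b * (∑' x, ∑' y, (N.eL f x y).toReal) := by
          rw [Summable.tsum_add ((N.eL_summable_outer h hmemh).mul_left _)
            ((N.eL_summable_outer f hmemf).mul_left _), tsum_mul_left, tsum_mul_left]
      _ = 2 * a * N.normSqR h + 2 * b * N.normSqR f := by
          rw [N.normSqR_eq_tsum_eL h hmemh, N.normSqR_eq_tsum_eL f hmemf]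
  have hwE : ∀ x y, N.adj x y → wr x y = N.c x y
      * (a * (∫ s in (0:ℝ)..1, ‖h x y s‖ ^ 2) + b * ∫ s in (0:ℝ)..1, ‖f x y s‖ ^ 2) := by
    intro x y hxy
    rw [hwrdef]
    simp only
    rw [N.eL_toReal h hmemh x y, N.eL_toReal f hmemf x y]
    ring
  have hkeyf : ∀ x y, N.c x y * ‖f x y 0‖ ^ 2 ≤ wr x y := by
    intro x y
    by_cases hxy : N.adj x y
    · rw [hwE x y hxy]
      refine mul_le_mul_of_nonneg_left ?_ (hc0 x y)
      nlinarith [hEbound x y hxy, sq_nonneg ‖g x y 0‖]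
    · rw [N.c_eq_zero x y hxy, zero_mul]
      exact hwr0 x y
  have hkeyg : ∀ x y, N.c x y * ‖g x y 0‖ ^ 2 ≤ wr x y := by
    intro x y
    by_cases hxy : N.adj x y
    · rw [hwE x y hxy]
      refine mul_le_mul_of_nonneg_left ?_ (hc0 x y)
      nlinarith [hEbound x y hxy, sq_nonneg ‖f x y 0‖]
    · rw [N.c_eq_zero x y hxy, zero_mul]
      exact hwr0 x y
  -- Part 1 and 2 : the vertex values
  have hφx : ∀ x, N.m0 x * ‖φ x‖ ^ 2 ≤ T x := by
    intro x
    have heq : ∀ y, N.c x y * ‖φ x‖ ^ 2 = N.c x y * ‖f x y 0‖ ^ 2 := fun y => by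
      by_cases hxy : N.adj x y
      · rw [hφ x y hxy]
      · rw [N.c_eq_zero x y hxy, zero_mul, zero_mul]
    have hsum1 : Summable fun y => N.c x y * ‖f x y 0‖ ^ 2 :=
      ((N.c_summable x).mul_right _).congr heq
    calc N.m0 x * ‖φ x‖ ^ 2 = ∑' y, N.c x y * ‖φ x‖ ^ 2 := by
          rw [Network.m0, tsum_mul_right]
      _ = ∑' y, N.c x y * ‖f x y 0‖ ^ 2 := tsum_congr heq
      _ ≤ T x := Summable.tsum_le_tsum (fun y => hkeyf x y) hsum1 (hwrSummable x)
  have part1 : Summable fun x => N.m0 x * ‖φ x‖ ^ 2 :=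
    Summable.of_nonneg_of_le (fun x => mul_nonneg (hm0 x) (sq_nonneg _)) hφx hTsum
  have part2 : N.vertexNormSqR φ ≤ 2 * a * N.normSqR h + 2 * b * N.normSqR f := by
    rw [Network.vertexNormSqR, ← hTval]
    exact Summable.tsum_le_tsum hφx part1 hTsum
  -- Part 3 : summability of `c(xy) ‖g(xy,0)‖`
  have part3 : ∀ x, Summable fun y => N.c x y * ‖g x y 0‖ := by
    intro x
    refine Summable.of_nonneg_of_le (fun y => mul_nonneg (hc0 x y) (norm_nonneg _))
      (fun y => ?_) (((N.c_summable x).add (hwrSummable x)).div_const 2)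
    have h1 : N.c x y * ‖g x y 0‖ * 2 ≤ N.c x y + N.c x y * ‖g x y 0‖ ^ 2 := by
      nlinarith [mul_nonneg (hc0 x y) (sq_nonneg (‖g x y 0‖ - 1))]
    have h2 := hkeyg x y
    rw [le_div_iff₀ (by norm_num : (0:ℝ) < 2)]
    linarith
  -- Parts 4 and 5 : the normal derivatives
  have hψ : ∀ x, N.m0 x * ‖(N.m0 x : ℂ)⁻¹ * ∑' y, (N.c x y : ℂ) * g x y 0‖ ^ 2 ≤ T x := by
    intro x
    have hQsum : Summable fun y => N.c x y * ‖g x y 0‖ ^ 2 :=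
      Summable.of_nonneg_of_le (fun y => mul_nonneg (hc0 x y) (sq_nonneg _))
        (fun y => hkeyg x y) (hwrSummable x)
    have hQT : (∑' y, N.c x y * ‖g x y 0‖ ^ 2) ≤ T x :=
      Summable.tsum_le_tsum (fun y => hkeyg x y) hQsum (hwrSummable x)
    have hQ0 : 0 ≤ ∑' y, N.c x y * ‖g x y 0‖ ^ 2 :=
      tsum_nonneg fun y => mul_nonneg (hc0 x y) (sq_nonneg _)
    by_cases hm : N.m0 x = 0
    · rw [hm, zero_mul]
      exact le_trans hQ0 hQT
    · have hmpos : 0 < N.m0 x := lt_of_le_of_ne (hm0 x) (Ne.symm hm)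
      have hnormeq : ∀ y, N.c x y * ‖g x y 0‖ = ‖(N.c x y : ℂ) * g x y 0‖ := fun y => by
        rw [norm_mul, Complex.norm_real, Real.norm_eq_abs, abs_of_nonneg (hc0 x y)]
      have hsumnorm : Summable fun y => ‖(N.c x y : ℂ) * g x y 0‖ :=
        (part3 x).congr hnormeq
      have hnorm : ‖∑' y, (N.c x y : ℂ) * g x y 0‖ ≤ ∑' y, N.c x y * ‖g x y 0‖ :=
        (norm_tsum_le_tsum_norm hsumnorm).trans_eq (tsum_congr hnormeq).symm
      have hCS := tsum_cauchy_schwarz' (N.c x) (fun y => ‖g x y 0‖) (hc0 x)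
        (fun y => norm_nonneg _) (N.c_summable x) hQsum
      refine le_trans ?_ hQT
      have hS2 : ‖∑' y, (N.c x y : ℂ) * g x y 0‖ ^ 2
          ≤ N.m0 x * ∑' y, N.c x y * ‖g x y 0‖ ^ 2 := by
        calc ‖∑' y, (N.c x y : ℂ) * g x y 0‖ ^ 2
            ≤ (∑' y, N.c x y * ‖g x y 0‖) ^ 2 :=
              pow_le_pow_left₀ (norm_nonneg _) hnorm 2
          _ ≤ (∑' y, N.c x y) * ∑' y, N.c x y * ‖g x y 0‖ ^ 2 := hCS
          _ = N.m0 x * ∑' y, N.c x y * ‖g x y 0‖ ^ 2 := by rw [Network.m0]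
      have hψnorm : ‖(N.m0 x : ℂ)⁻¹ * ∑' y, (N.c x y : ℂ) * g x y 0‖
          = (N.m0 x)⁻¹ * ‖∑' y, (N.c x y : ℂ) * g x y 0‖ := by
        rw [norm_mul, norm_inv, Complex.norm_real, Real.norm_eq_abs, abs_of_nonneg (hm0 x)]
      rw [hψnorm, mul_pow]
      calc N.m0 x * (((N.m0 x)⁻¹) ^ 2 * ‖∑' y, (N.c x y : ℂ) * g x y 0‖ ^ 2)
          ≤ N.m0 x * (((N.m0 x)⁻¹) ^ 2 * (N.m0 x * ∑' y, N.c x y * ‖g x y 0‖ ^ 2)) := by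
            refine mul_le_mul_of_nonneg_left
              (mul_le_mul_of_nonneg_left hS2 (by positivity)) (hm0 x)
        _ = ∑' y, N.c x y * ‖g x y 0‖ ^ 2 := by
            field_simp
  have part4 : Summable fun x =>
      N.m0 x * ‖(N.m0 x : ℂ)⁻¹ * ∑' y, (N.c x y : ℂ) * g x y 0‖ ^ 2 :=
    Summable.of_nonneg_of_le (fun x => mul_nonneg (hm0 x) (sq_nonneg _)) hψ hTsum
  have part5 : N.vertexNormSqR (fun x => (N.m0 x : ℂ)⁻¹ * ∑' y, (N.c x y : ℂ) * g x y 0)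
      ≤ 2 * a * N.normSqR h + 2 * b * N.normSqR f := by
    rw [Network.vertexNormSqR, ← hTval]
    exact Summable.tsum_le_tsum hψ part4 hTsum
  exact ⟨part1, part2, part3, part4, part5⟩
end
end

section
/- Let z ∈ ℂ with z ∉ Σ := {(πn)² : n∈ℕ}, and let h ∈ ℓ²(X⁰,m⁰). Define F:X¹→ℂ by F(xy,t) = h(x)·Φ(√z,1−t)/Φ(√z,1) + h(y)·Φ(√z,t)/Φ(√z,1). Then F ∈ Ĥ²(X¹,m¹), F satisfies the vertex continuity conditions (so F ∈ dom S), −F''_{xy} = z·F_{xy} on every edge (i.e. SF = zF), and ΓF = h. In other words, F = γ(z)h, where γ(z) is the Krein γ-field of the boundary triple (ℓ²(X⁰,m⁰),Γ,Γ') for S. -/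
open MeasureTheory Set ENNReal

set_option linter.unusedSectionVars false

noncomputable section

namespace Network

/-- The Krein γ-field: `(γ(z)h)(xy,t) = h(x)·Φ(√z,1-t)/Φ(√z,1) + h(y)·Φ(√z,t)/Φ(√z,1)`. -/
def gammaField {V : Type} (_N : Network V) (z : ℂ) (h : V → ℂ) (x y : V) (t : ℝ) : ℂ :=
  h x * Phi (z ^ ((1:ℂ)/2)) (1 - t) / Phi (z ^ ((1:ℂ)/2)) 1
    + h y * Phi (z ^ ((1:ℂ)/2)) t / Phi (z ^ ((1:ℂ)/2)) 1

end Network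

section AuxMemL2

def PhiD (z : ℂ) (t : ℝ) : ℂ := if z = 0 then 1 else Complex.cos (z * t)

lemma hasDerivAt_Phi (w : ℂ) (t : ℝ) :
    HasDerivAt (fun s : ℝ => Phi w s) (PhiD w t) t := by
  by_cases hw : w = 0
  · simp only [Phi, PhiD, hw, if_pos rfl]
    exact Complex.ofRealCLM.hasDerivAt (x := t)
  · simp only [Phi, PhiD, if_neg hw]
    have hE : HasDerivAt (fun u : ℂ => Complex.sin (w * u)) (Complex.cos (w * t) * w) (t : ℂ) := by
      exact ((Complex.hasDerivAt_sin (w * t)).comp (t : ℂ)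
        ((hasDerivAt_id (t : ℂ)).const_mul w)).congr_deriv (by simp only [id, mul_one])
    have := (hE.comp_ofReal).div_const w
    simpa [mul_div_assoc, div_self hw] using this

lemma hasDerivAt_PhiD (w : ℂ) (t : ℝ) :
    HasDerivAt (fun s : ℝ => PhiD w s) (-(w ^ 2 * Phi w t)) t := by
  by_cases hw : w = 0
  · simp only [PhiD, hw, if_pos rfl, pow_two, zero_mul, neg_zero]
    exact hasDerivAt_const t 1
  · simp only [Phi, PhiD, if_neg hw]
    have hE : HasDerivAt (fun u : ℂ => Complex.cos (w * u)) (-Complex.sin (w * t) * w) (t : ℂ) := by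
      exact ((Complex.hasDerivAt_cos (w * t)).comp (t : ℂ)
        ((hasDerivAt_id (t : ℂ)).const_mul w)).congr_deriv (by simp only [id, mul_one])
    have := hE.comp_ofReal
    convert this using 1
    field_simp

namespace Network

variable {V : Type} [Countable V] [MeasurableSpace V] [DiscreteMeasurableSpace V]

lemma c_nonneg (N : Network V) (x y : V) : 0 ≤ N.c x y := by
  by_cases hxy : N.adj x y
  · exact (N.c_pos x y hxy).le
  · exact (N.c_eq_zero x y hxy).ge

lemma m0_nonneg (N : Network V) (x : V) : 0 ≤ N.m0 x := tsum_nonneg (N.c_nonneg x)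

lemma ofReal_m0 (N : Network V) (x : V) :
    ENNReal.ofReal (N.m0 x) = ∑' y, ENNReal.ofReal (N.c x y) :=
  ENNReal.ofReal_tsum_of_nonneg (N.c_nonneg x) (N.c_summable x)

lemma memL2_of_bound (N : Network V) (φ : V → V → ℝ → ℂ) (h : V → ℂ)
    (hcont : ∀ x y, Continuous (φ x y)) (C : ℝ)
    (hb : ∀ x y, ∀ t ∈ Set.Ioo (0:ℝ) 1, ‖φ x y t‖ ≤ C * (‖h x‖ + ‖h y‖))
    (hh : Summable fun x => N.m0 x * ‖h x‖ ^ 2) :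
    MemLp (fun p : (V × V) × ℝ => φ p.1.1 p.1.2 p.2) 2 N.edgeMeasure := by
  have hmeas : Measurable (fun p : (V × V) × ℝ => φ p.1.1 p.1.2 p.2) := by
    have H : Measurable (fun q : ℝ × (V × V) => φ q.2.1 q.2.2 q.1) :=
      measurable_from_prod_countable_left fun e => (hcont e.1 e.2).measurable
    exact H.comp measurable_swap
  refine ⟨hmeas.aestronglyMeasurable, ?_⟩
  rw [eLpNorm_lt_top_iff_lintegral_rpow_enorm_lt_top (by norm_num) (by norm_num)]
  have htwo : ((2 : ℝ≥0∞).toReal) = (2 : ℝ) := by simp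
  rw [htwo]
  -- the edge-wise bound in ℝ≥0∞
  set B : V → V → ℝ≥0∞ := fun x y =>
    ENNReal.ofReal (2 * C ^ 2 * (‖h x‖ ^ 2 + ‖h y‖ ^ 2)) with hB
  -- compute the lintegral over the sum measure
  have hfm : Measurable (fun p : (V × V) × ℝ => (‖φ p.1.1 p.1.2 p.2‖₊ : ℝ≥0∞) ^ (2:ℝ)) :=
    (hmeas.nnnorm.coe_nnreal_ennreal).pow_const _
  rw [edgeMeasure, lintegral_sum_measure]
  have hedge : ∀ e : V × V,
      (∫⁻ p, (‖φ p.1.1 p.1.2 p.2‖₊ : ℝ≥0∞) ^ (2:ℝ)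
        ∂(Measure.map (fun t => (e, t))
          ((ENNReal.ofReal (N.c e.1 e.2 / 2)) • (volume.restrict (Set.Ioo (0:ℝ) 1)))))
      ≤ ENNReal.ofReal (N.c e.1 e.2 / 2) * B e.1 e.2 := by
    intro e
    rw [lintegral_map hfm measurable_prodMk_left, lintegral_smul_measure]
    refine mul_le_mul_right ?_ _
    calc ∫⁻ t in Set.Ioo (0:ℝ) 1, (‖φ e.1 e.2 t‖₊ : ℝ≥0∞) ^ (2:ℝ)
        ≤ ∫⁻ _ in Set.Ioo (0:ℝ) 1, B e.1 e.2 := by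
          refine setLIntegral_mono' measurableSet_Ioo fun t ht => ?_
          have h1 := hb e.1 e.2 t ht
          have h2 : ‖φ e.1 e.2 t‖ ^ 2 ≤ (C * (‖h e.1‖ + ‖h e.2‖)) ^ 2 :=
            pow_le_pow_left₀ (norm_nonneg _) h1 2
          have h3 : (C * (‖h e.1‖ + ‖h e.2‖)) ^ 2 ≤ 2 * C ^ 2 * (‖h e.1‖ ^ 2 + ‖h e.2‖ ^ 2) := by
            nlinarith [sq_nonneg (‖h e.1‖ - ‖h e.2‖), sq_nonneg C, sq_nonneg (‖h e.1‖ + ‖h e.2‖)]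
          have : (‖φ e.1 e.2 t‖₊ : ℝ≥0∞) ^ (2:ℝ) = ENNReal.ofReal (‖φ e.1 e.2 t‖ ^ 2) := by
            rw [show (‖φ e.1 e.2 t‖₊ : ℝ≥0∞) = ENNReal.ofReal ‖φ e.1 e.2 t‖ from (ofReal_norm _).symm, ENNReal.rpow_two,
              ← ENNReal.ofReal_pow (norm_nonneg _)]
          rw [this, hB]
          exact ENNReal.ofReal_le_ofReal (h2.trans h3)
      _ = B e.1 e.2 := by
          rw [setLIntegral_const, Real.volume_Ioo]
          norm_num
  refine lt_of_le_of_lt (ENNReal.tsum_le_tsum hedge) ?_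
  -- now sum the bound
  have hc2 : ∀ x y : V, (0:ℝ) ≤ N.c x y / 2 := fun x y => div_nonneg (N.c_nonneg x y) (by norm_num)
  have hsum : ∑' e : V × V, ENNReal.ofReal (N.c e.1 e.2 / 2) * B e.1 e.2
      = ENNReal.ofReal (C ^ 2) * (∑' x, ∑' y, ENNReal.ofReal (N.c x y) * ENNReal.ofReal (‖h x‖ ^ 2))
        + ENNReal.ofReal (C ^ 2) * (∑' x, ∑' y, ENNReal.ofReal (N.c x y) * ENNReal.ofReal (‖h y‖ ^ 2)) := by
    have step : ∑' e : V × V, ENNReal.ofReal (N.c e.1 e.2 / 2) * B e.1 e.2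
        = ∑' x, ∑' y, (ENNReal.ofReal (C ^ 2) * (ENNReal.ofReal (N.c x y) * ENNReal.ofReal (‖h x‖ ^ 2))
            + ENNReal.ofReal (C ^ 2) * (ENNReal.ofReal (N.c x y) * ENNReal.ofReal (‖h y‖ ^ 2))) := by
      rw [ENNReal.tsum_prod']
      refine tsum_congr fun x => tsum_congr fun y => ?_
      simp only
      rw [hB, ← ENNReal.ofReal_mul (hc2 x y),
        ← ENNReal.ofReal_mul (N.c_nonneg x y), ← ENNReal.ofReal_mul (sq_nonneg C),
        ← ENNReal.ofReal_mul (N.c_nonneg x y), ← ENNReal.ofReal_mul (sq_nonneg C),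
        ← ENNReal.ofReal_add (mul_nonneg (sq_nonneg C) (mul_nonneg (N.c_nonneg x y) (by positivity)))
          (mul_nonneg (sq_nonneg C) (mul_nonneg (N.c_nonneg x y) (by positivity)))]
      congr 1
      ring
    rw [step]
    simp only [ENNReal.tsum_add, ENNReal.tsum_mul_left]
  rw [hsum]
  have hT : ∀ x : V, ∑' y, ENNReal.ofReal (N.c x y) * ENNReal.ofReal (‖h x‖ ^ 2)
      = ENNReal.ofReal (N.m0 x * ‖h x‖ ^ 2) := by
    intro x
    rw [ENNReal.tsum_mul_right, ← N.ofReal_m0,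
      ← ENNReal.ofReal_mul (m0_nonneg N x)]
  have hTfin : (∑' x, ENNReal.ofReal (N.m0 x * ‖h x‖ ^ 2)) < ⊤ := by
    rw [← ENNReal.ofReal_tsum_of_nonneg (fun x => mul_nonneg (N.m0_nonneg x) (by positivity)) hh]
    exact ENNReal.ofReal_lt_top
  have h1 : ∑' x, ∑' y, ENNReal.ofReal (N.c x y) * ENNReal.ofReal (‖h x‖ ^ 2)
      = ∑' x, ENNReal.ofReal (N.m0 x * ‖h x‖ ^ 2) := tsum_congr hT
  have h2 : ∑' x, ∑' y, ENNReal.ofReal (N.c x y) * ENNReal.ofReal (‖h y‖ ^ 2)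
      = ∑' x, ENNReal.ofReal (N.m0 x * ‖h x‖ ^ 2) := by
    rw [ENNReal.tsum_comm]
    refine tsum_congr fun y => ?_
    rw [← hT y]
    exact tsum_congr fun x => by rw [N.c_symm x y]
  rw [h1, h2]
  exact ENNReal.add_lt_top.mpr ⟨ENNReal.mul_lt_top ENNReal.ofReal_lt_top hTfin,
    ENNReal.mul_lt_top ENNReal.ofReal_lt_top hTfin⟩

end Network

end AuxMemL2


/-- Let `z ∉ Σ = {(πn)² : n ∈ ℕ}` and `h ∈ ℓ²(X⁰,m⁰)`.  Define
`F(xy,t) = h(x)·Φ(√z,1-t)/Φ(√z,1) + h(y)·Φ(√z,t)/Φ(√z,1)`.  Then `F ∈ Ĥ²(X¹,m¹)`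
(`F` is square integrable, edgewise smooth with square-integrable derivatives), `F` is
compatible with the identifications `(xy,t) ≡ (yx,1-t)` and continuous at the vertices
(so `F ∈ dom S`), on every edge `-F''_{xy} = z F_{xy}` (i.e. `SF = zF`), and `ΓF = h`;
in other words, `F = γ(z)h` for the Krein γ-field `γ` of the boundary triple
`(ℓ²(X⁰,m⁰), Γ, Γ')`. -/
theorem gammaField_in_ker_S_sub_z
    {V : Type} [Countable V] [MeasurableSpace V] [DiscreteMeasurableSpace V]
    (N : Network V) (z : ℂ) (hz : ∀ n : ℕ, 1 ≤ n → z ≠ (((Real.pi * n : ℝ) : ℂ))^2)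
    (h : V → ℂ) (hh : Summable fun x => N.m0 x * ‖h x‖^2) :
    MemLp (fun p : (V × V) × ℝ => N.gammaField z h p.1.1 p.1.2 p.2) 2 N.edgeMeasure ∧
    (∀ x y : V, ∀ t : ℝ, N.gammaField z h x y t = N.gammaField z h y x (1 - t)) ∧
    (∃ g : V → V → ℝ → ℂ,
      (∀ x y, N.adj x y → ∀ t : ℝ,
        HasDerivAt (fun s => N.gammaField z h x y s) (g x y t) t ∧
        HasDerivAt (fun s => g x y s) (-(z * N.gammaField z h x y t)) t) ∧
      MemLp (fun p : (V × V) × ℝ => g p.1.1 p.1.2 p.2) 2 N.edgeMeasure) ∧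
    (∀ x u v, N.adj x u → N.adj x v →
      N.gammaField z h x u 0 = N.gammaField z h x v 0) ∧
    (∀ x y, N.adj x y → N.gammaField z h x y 0 = h x) := by
  classical
  set w : ℂ := z ^ ((1:ℂ)/2) with hw
  have hw2 : w ^ 2 = z := by
    by_cases hz0 : z = 0
    · simp [hw, hz0, Complex.zero_cpow (by norm_num : (1:ℂ)/2 ≠ 0)]
    · rw [hw, sq, ← Complex.cpow_add _ _ hz0]
      norm_num
  set D : ℂ := Phi w 1 with hDdef
  have hD : D ≠ 0 := by
    by_cases hz0 : z = 0
    · have hw0 : w = 0 := by simp [hw, hz0, Complex.zero_cpow (by norm_num : (1:ℂ)/2 ≠ 0)]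
      simp [hDdef, Phi, hw0]
    · have hw0 : w ≠ 0 := fun h0 => hz0 (by rw [← hw2, h0]; ring)
      simp only [hDdef, Phi, if_neg hw0, Complex.ofReal_one, mul_one]
      intro hcon
      rw [_root_.div_eq_zero_iff] at hcon
      rcases hcon with hcon | hcon
      · rw [Complex.sin_eq_zero_iff] at hcon
        obtain ⟨k, hk⟩ := hcon
        have hk0 : k ≠ 0 := by rintro rfl; simp at hk; exact hw0 hk
        refine hz k.natAbs (by omega) ?_
        have hsq : ((k.natAbs : ℤ)) ^ 2 = k ^ 2 := Int.natAbs_sq k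
        have hc' : ((k.natAbs : ℕ) : ℂ) ^ 2 = (k : ℂ) ^ 2 := by
          calc ((k.natAbs : ℕ) : ℂ) ^ 2 = (((k.natAbs : ℤ) ^ 2 : ℤ) : ℂ) := by
                push_cast
                rw [Int.abs_eq_natAbs]
                norm_cast
            _ = ((k ^ 2 : ℤ) : ℂ) := by rw [hsq]
            _ = (k : ℂ) ^ 2 := by push_cast; ring
        rw [← hw2, hk]
        push_cast
        rw [mul_pow, mul_pow, hc']
        ring
      · exact hw0 hcon
  have hgamma : ∀ x y : V, ∀ t : ℝ,
      N.gammaField z h x y t = h x * Phi w (1 - t) / D + h y * Phi w t / D := fun _ _ _ => rfl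
  set g : V → V → ℝ → ℂ := fun x y t => h x * (-(PhiD w (1 - t))) / D + h y * PhiD w t / D with hg
  have hone : ∀ t : ℝ, HasDerivAt (fun s : ℝ => (1:ℝ) - s) (-1) t := fun t => by
    exact ((hasDerivAt_const t (1:ℝ)).sub (hasDerivAt_id t)).congr_deriv (by norm_num)
  have hFderiv : ∀ x y t, HasDerivAt (fun s => N.gammaField z h x y s) (g x y t) t := by
    intro x y t
    have h1 : HasDerivAt (fun s : ℝ => Phi w (1 - s)) (-(PhiD w (1 - t))) t :=
      HasDerivAt.comp_const_sub 1 t (hasDerivAt_Phi w (1 - t))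
    have h2 := hasDerivAt_Phi w t
    have key := ((h1.const_mul (h x)).div_const D).add ((h2.const_mul (h y)).div_const D)
    have hfun : (fun s => N.gammaField z h x y s)
        = fun s => h x * Phi w (1 - s) / D + h y * Phi w s / D := funext fun s => hgamma x y s
    rw [hfun]
    exact key
  have hgderiv : ∀ x y t, HasDerivAt (fun s => g x y s) (-(z * N.gammaField z h x y t)) t := by
    intro x y t
    have h1 : HasDerivAt (fun s : ℝ => -(PhiD w (1 - s))) (-(w ^ 2 * Phi w (1 - t))) t := by
      have := (HasDerivAt.comp_const_sub 1 t (hasDerivAt_PhiD w (1 - t))).neg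
      exact this.congr_deriv (by ring)
    have h2 := hasDerivAt_PhiD w t
    have := ((h1.const_mul (h x)).div_const D).add ((h2.const_mul (h y)).div_const D)
    refine this.congr_deriv ?_
    rw [hgamma, ← hw2]
    field_simp
    ring
  have hFcont : ∀ x y : V, Continuous (fun t => N.gammaField z h x y t) :=
    fun x y => continuous_iff_continuousAt.mpr fun t => (hFderiv x y t).continuousAt
  have hgcont : ∀ x y : V, Continuous (fun t => g x y t) :=
    fun x y => continuous_iff_continuousAt.mpr fun t => (hgderiv x y t).continuousAt
  -- uniform bounds on [0,1]
  have hPhicont : Continuous (fun s : ℝ => Phi w s) :=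
    continuous_iff_continuousAt.mpr fun t => (hasDerivAt_Phi w t).continuousAt
  have hPhiDcont : Continuous (fun s : ℝ => PhiD w s) :=
    continuous_iff_continuousAt.mpr fun t => (hasDerivAt_PhiD w t).continuousAt
  obtain ⟨M1, hM1⟩ := (isCompact_Icc (a := (0:ℝ)) (b := 1)).exists_bound_of_continuousOn
    ((hPhicont.div_const D).continuousOn)
  obtain ⟨M2, hM2⟩ := (isCompact_Icc (a := (0:ℝ)) (b := 1)).exists_bound_of_continuousOn
    ((hPhiDcont.div_const D).continuousOn)
  have hM1' : ∀ s ∈ Set.Icc (0:ℝ) 1, ‖Phi w s / D‖ ≤ max M1 M2 :=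
    fun s hs => (hM1 s hs).trans (le_max_left _ _)
  have hM2' : ∀ s ∈ Set.Icc (0:ℝ) 1, ‖PhiD w s / D‖ ≤ max M1 M2 :=
    fun s hs => (hM2 s hs).trans (le_max_right _ _)
  set C : ℝ := max M1 M2 with hC
  have hmem : ∀ t ∈ Set.Ioo (0:ℝ) 1, t ∈ Set.Icc (0:ℝ) 1 ∧ (1 - t) ∈ Set.Icc (0:ℝ) 1 := by
    intro t ht
    obtain ⟨ht1, ht2⟩ := ht
    exact ⟨⟨ht1.le, ht2.le⟩, ⟨by linarith, by linarith⟩⟩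
  have hboundF : ∀ x y : V, ∀ t ∈ Set.Ioo (0:ℝ) 1,
      ‖N.gammaField z h x y t‖ ≤ C * (‖h x‖ + ‖h y‖) := by
    intro x y t ht
    obtain ⟨ht1, ht2⟩ := hmem t ht
    rw [hgamma]
    calc ‖h x * Phi w (1 - t) / D + h y * Phi w t / D‖
        ≤ ‖h x * Phi w (1 - t) / D‖ + ‖h y * Phi w t / D‖ := norm_add_le _ _
      _ ≤ ‖h x‖ * C + ‖h y‖ * C := by
          rw [mul_div_assoc, mul_div_assoc, norm_mul, norm_mul]
          gcongr
          · exact hM1' _ ht2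
          · exact hM1' _ ht1
      _ = C * (‖h x‖ + ‖h y‖) := by ring
  have hboundg : ∀ x y : V, ∀ t ∈ Set.Ioo (0:ℝ) 1,
      ‖g x y t‖ ≤ C * (‖h x‖ + ‖h y‖) := by
    intro x y t ht
    obtain ⟨ht1, ht2⟩ := hmem t ht
    rw [hg]
    calc ‖h x * (-(PhiD w (1 - t))) / D + h y * PhiD w t / D‖
        ≤ ‖h x * (-(PhiD w (1 - t))) / D‖ + ‖h y * PhiD w t / D‖ := norm_add_le _ _
      _ ≤ ‖h x‖ * C + ‖h y‖ * C := by
          rw [mul_div_assoc, mul_div_assoc, norm_mul, norm_mul]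
          have : ‖-(PhiD w (1 - t)) / D‖ = ‖PhiD w (1 - t) / D‖ := by
            rw [neg_div, norm_neg]
          rw [this]
          gcongr
          · exact hM2' _ ht2
          · exact hM2' _ ht1
      _ = C * (‖h x‖ + ‖h y‖) := by ring
  have hPhi0 : Phi w 0 = 0 := by
    by_cases hw0 : w = 0 <;> simp [Phi, hw0]
  have hGamma : ∀ x y : V, N.gammaField z h x y 0 = h x := by
    intro x y
    rw [hgamma]
    simp only [sub_zero, hPhi0, mul_zero, zero_div, add_zero, zero_mul]
    rw [mul_div_assoc, div_self hD, mul_one]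
  refine ⟨?_, ?_, ⟨g, fun x y _ t => ⟨hFderiv x y t, hgderiv x y t⟩, ?_⟩, ?_, ?_⟩
  · exact N.memL2_of_bound _ h hFcont C hboundF hh
  · intro x y t
    have hsub : 1 - (1 - t) = t := by ring
    rw [hgamma, hgamma, hsub]
    ring
  · exact N.memL2_of_bound _ h hgcont C hboundg hh
  · intro x u v _ _
    rw [hGamma, hGamma]
  · intro x y _
    exact hGamma x y
end
end

section
/- For every τ ∈ ℝ the d'Alembert operators satisfy the identity C(τ+1) + C(τ−1) = 2·C(1)·C(τ) as bounded operators on L²(X¹,m¹). -/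
open MeasureTheory Set ENNReal

set_option linter.unusedSectionVars false

noncomputable section

namespace Network

variable {V : Type} [Countable V] [MeasurableSpace V] [DiscreteMeasurableSpace V]

lemma m0_pos (N : Network V) {x y : V} (h : N.adj x y) : 0 < N.m0 x :=
  lt_of_lt_of_le (N.c_pos x y h) ((N.c_summable x).le_tsum y fun z _ => N.c_nonneg x z)

lemma tsum_ofReal_c (N : Network V) (y : V) :
    ∑' v, ENNReal.ofReal (N.c y v) = ENNReal.ofReal (N.m0 y) :=
  (ENNReal.ofReal_tsum_of_nonneg (fun v => N.c_nonneg y v) (N.c_summable y)).symm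

lemma summable_c_complex (N : Network V) (y : V) : Summable fun v => (N.c y v : ℂ) :=
  (Complex.ofRealCLM : ℝ →L[ℝ] ℂ).summable (N.c_summable y)

lemma tsum_c_complex (N : Network V) (y : V) : ∑' v, (N.c y v : ℂ) = (N.m0 y : ℂ) :=
  (Complex.ofReal_tsum _).symm

/-- weighted `ℓ²` functional on edge functions -/
def Wgt (N : Network V) (g : V → V → ℂ) : ℝ≥0∞ :=
  ∑' e : V × V, ENNReal.ofReal (N.c e.1 e.2) * (‖g e.1 e.2‖₊ : ℝ≥0∞) ^ 2

lemma ennnorm_tsum_le {ι : Type*} (h : ι → ℂ) :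
    (‖∑' i, h i‖₊ : ℝ≥0∞) ≤ ∑' i, (‖h i‖₊ : ℝ≥0∞) := by
  by_cases hs : Summable fun i => ‖h i‖
  · calc (‖∑' i, h i‖₊ : ℝ≥0∞) = ENNReal.ofReal ‖∑' i, h i‖ :=
          (ofReal_norm _).symm
      _ ≤ ENNReal.ofReal (∑' i, ‖h i‖) :=
          ENNReal.ofReal_le_ofReal (norm_tsum_le_tsum_norm hs)
      _ = ∑' i, ENNReal.ofReal ‖h i‖ :=
          ENNReal.ofReal_tsum_of_nonneg (fun _ => norm_nonneg _) hs
      _ = ∑' i, (‖h i‖₊ : ℝ≥0∞) := by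
          simp only [ofReal_norm, enorm_eq_nnnorm]
  · have h1 : ¬ Summable fun i => ‖h i‖₊ := by
      intro hc; exact hs (by simpa using NNReal.summable_coe.mpr hc)
    have : ∑' i, (‖h i‖₊ : ℝ≥0∞) = ⊤ := by
      by_contra hc
      exact h1 (ENNReal.tsum_coe_ne_top_iff_summable.mp hc)
    simp [this]

lemma tsum_cs (w a : V → ℝ≥0∞) :
    (∑' v, w v * a v) ^ 2 ≤ (∑' v, w v) * ∑' v, w v * a v ^ 2 := by
  have hconj : Real.HolderConjugate 2 2 := by
    rw [Real.holderConjugate_iff]; norm_num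
  have hh := ENNReal.lintegral_mul_le_Lp_mul_Lq (Measure.count : Measure V) hconj
    (f := fun v => w v ^ (2:ℝ)⁻¹) (g := fun v => w v ^ (2:ℝ)⁻¹ * a v)
    Measurable.of_discrete.aemeasurable Measurable.of_discrete.aemeasurable
  simp only [lintegral_count, Pi.mul_apply] at hh
  have e1 : ∀ v, w v ^ (2:ℝ)⁻¹ * (w v ^ (2:ℝ)⁻¹ * a v) = w v * a v := by
    intro v
    rw [← mul_assoc, ← ENNReal.rpow_add_of_nonneg _ _ (by norm_num) (by norm_num)]
    norm_num
  have e2 : ∀ v, (w v ^ (2:ℝ)⁻¹) ^ (2:ℝ) = w v := by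
    intro v
    rw [← ENNReal.rpow_mul]
    norm_num
  have e3 : ∀ v, (w v ^ (2:ℝ)⁻¹ * a v) ^ (2:ℝ) = w v * a v ^ 2 := by
    intro v
    rw [ENNReal.mul_rpow_of_nonneg _ _ (by norm_num), e2]
    congr 1
    rw [show ((2:ℝ)) = ((2:ℕ):ℝ) by norm_num, ENNReal.rpow_natCast]
  simp only [e1, e2, e3] at hh
  calc (∑' v, w v * a v) ^ 2
      ≤ ((∑' v, w v) ^ (1/(2:ℝ)) * (∑' v, w v * a v ^ 2) ^ (1/(2:ℝ))) ^ 2 :=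
        pow_le_pow_left₀ zero_le hh 2
    _ = (∑' v, w v) * ∑' v, w v * a v ^ 2 := by
        rw [mul_pow, ← ENNReal.rpow_natCast ((∑' v, w v) ^ (1/(2:ℝ))) 2,
          ← ENNReal.rpow_natCast ((∑' v, w v * a v ^ 2) ^ (1/(2:ℝ))) 2,
          ← ENNReal.rpow_mul, ← ENNReal.rpow_mul]
        norm_num [ENNReal.rpow_one]


lemma ennnorm_ofReal_mul (c : ℝ) (hc : 0 ≤ c) (z : ℂ) :
    (‖(c : ℂ) * z‖₊ : ℝ≥0∞) = ENNReal.ofReal c * (‖z‖₊ : ℝ≥0∞) := by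
  rw [nnnorm_mul, ENNReal.coe_mul]
  congr 1
  rw [← enorm_eq_nnnorm, ← ofReal_norm, Complex.norm_real, Real.norm_of_nonneg hc]

lemma sq_add_le (α β : ℝ≥0∞) : (α + β) ^ 2 ≤ 4 * α ^ 2 + 4 * β ^ 2 := by
  have h1 : α + β ≤ 2 * max α β := by
    rw [two_mul]
    exact add_le_add (le_max_left _ _) (le_max_right _ _)
  calc (α + β)^2 ≤ (2 * max α β)^2 := pow_le_pow_left₀ zero_le h1 2
    _ = 4 * (max α β)^2 := by rw [mul_pow]; ring
    _ ≤ 4 * (α^2 + β^2) := by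
        gcongr
        rcases max_cases α β with ⟨h,_⟩|⟨h,_⟩ <;> rw [h]
        · exact le_add_of_nonneg_right zero_le
        · exact le_add_of_nonneg_left zero_le
    _ = 4 * α^2 + 4*β^2 := by ring

/-- the key per-entry estimate used in both step lemmas -/
lemma entry_bound (N : Network V) {a : V} (ha : 0 < N.m0 a) (G : V → ℂ)
    (z : ℂ) :
    (‖(2 / N.m0 a : ℂ) * (∑' v, (N.c a v : ℂ) * G v) - z‖₊ : ℝ≥0∞) ^ 2
      ≤ ENNReal.ofReal (16 / N.m0 a) * (∑' v, ENNReal.ofReal (N.c a v) * (‖G v‖₊ : ℝ≥0∞)^2)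
        + 4 * (‖z‖₊ : ℝ≥0∞)^2 := by
  set κ : ℂ := (2 / N.m0 a : ℂ)
  set Sg : ℂ := ∑' v, (N.c a v : ℂ) * G v
  set T : ℝ≥0∞ := ∑' v, ENNReal.ofReal (N.c a v) * (‖G v‖₊ : ℝ≥0∞)^2
  have h1 : (‖κ * Sg - z‖₊ : ℝ≥0∞) ≤ (‖κ * Sg‖₊ : ℝ≥0∞) + (‖z‖₊ : ℝ≥0∞) := by
    exact_mod_cast nnnorm_sub_le _ _
  have h2 : (‖κ * Sg - z‖₊ : ℝ≥0∞) ^ 2 ≤ 4 * (‖κ * Sg‖₊ : ℝ≥0∞)^2 + 4 * (‖z‖₊ : ℝ≥0∞)^2 :=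
    le_trans (pow_le_pow_left₀ zero_le h1 2) (sq_add_le _ _)
  refine h2.trans (add_le_add_left ?_ _)
  -- bound 4 * ‖κΣ‖² ≤ ofReal(16/m0 a) * T
  have hκ : (‖κ‖₊ : ℝ≥0∞) = ENNReal.ofReal (2 / N.m0 a) := by
    have : κ = ((2 / N.m0 a : ℝ) : ℂ) := by push_cast; ring
    rw [this, ← enorm_eq_nnnorm, ← ofReal_norm, Complex.norm_real,
      Real.norm_of_nonneg (by positivity)]
  have hSg : (‖Sg‖₊ : ℝ≥0∞) ≤ ∑' v, ENNReal.ofReal (N.c a v) * (‖G v‖₊ : ℝ≥0∞) := by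
    refine (ennnorm_tsum_le _).trans ?_
    refine le_of_eq (tsum_congr fun v => ?_)
    exact ennnorm_ofReal_mul _ (N.c_nonneg a v) _
  have hcs : (∑' v, ENNReal.ofReal (N.c a v) * (‖G v‖₊ : ℝ≥0∞))^2
      ≤ ENNReal.ofReal (N.m0 a) * T := by
    have := tsum_cs (fun v => ENNReal.ofReal (N.c a v)) (fun v => (‖G v‖₊ : ℝ≥0∞))
    rwa [N.tsum_ofReal_c a] at this
  calc 4 * (‖κ * Sg‖₊ : ℝ≥0∞)^2
      = 4 * ((‖κ‖₊ : ℝ≥0∞)^2 * (‖Sg‖₊ : ℝ≥0∞)^2) := by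
        rw [nnnorm_mul]; push_cast; ring
    _ ≤ 4 * ((ENNReal.ofReal (2 / N.m0 a))^2 * (ENNReal.ofReal (N.m0 a) * T)) := by
        gcongr
        · exact le_of_eq hκ
        · exact le_trans (pow_le_pow_left₀ zero_le hSg 2) hcs
    _ ≤ ENNReal.ofReal (16 / N.m0 a) * T := by
        rw [← mul_assoc, ← mul_assoc]
        gcongr
        have h4 : (4:ℝ≥0∞) = ENNReal.ofReal 4 := by norm_num
        rw [h4, ← ENNReal.ofReal_pow (by positivity), ← ENNReal.ofReal_mul (by norm_num),
          ← ENNReal.ofReal_mul (by positivity)]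
        apply ENNReal.ofReal_le_ofReal
        have hne : N.m0 a ≠ 0 := ha.ne'
        apply le_of_eq
        field_simp
        ring

lemma wgt_tsum (N : Network V) (H : V → V → ℂ) :
    N.Wgt H = ∑' x, ∑' y, ENNReal.ofReal (N.c x y) * (‖H x y‖₊ : ℝ≥0∞) ^ 2 := by
  unfold Wgt
  exact ENNReal.tsum_prod (f := fun x y => ENNReal.ofReal (N.c x y) * (‖H x y‖₊ : ℝ≥0∞) ^ 2)

lemma wgt_step_fwd (N : Network V) (G : V → V → ℂ) :
    N.Wgt (fun x y => (2 / N.m0 y : ℂ) * ∑' v, (N.c y v : ℂ) * G y v - G y x)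
      ≤ 20 * N.Wgt G := by
  set A : V → V → ℝ≥0∞ := fun a b => (‖G a b‖₊ : ℝ≥0∞) ^ 2 with hA
  set T : V → ℝ≥0∞ := fun y => ∑' v, ENNReal.ofReal (N.c y v) * A y v with hT
  have hTW : ∑' y, T y = N.Wgt G := (N.wgt_tsum G).symm
  have hAW : ∑' y, ∑' x, ENNReal.ofReal (N.c x y) * A y x = N.Wgt G := by
    rw [← hTW]
    exact tsum_congr fun y => tsum_congr fun x => by rw [N.c_symm x y]
  rw [N.wgt_tsum, ENNReal.tsum_comm]
  have hpt : ∀ y x, ENNReal.ofReal (N.c x y) *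
      (‖(2 / N.m0 y : ℂ) * ∑' v, (N.c y v : ℂ) * G y v - G y x‖₊ : ℝ≥0∞) ^ 2
      ≤ ENNReal.ofReal (N.c x y) * (ENNReal.ofReal (16 / N.m0 y) * T y + 4 * A y x) := by
    intro y x
    rcases eq_or_ne (N.c x y) 0 with h0 | h0
    · simp [h0]
    · have hadj : N.adj x y := by
        by_contra hn; exact h0 (N.c_eq_zero x y hn)
      have hm : 0 < N.m0 y := N.m0_pos (N.adj_symm x y hadj)
      exact mul_le_mul_right (N.entry_bound hm (fun v => G y v) (G y x)) _
  calc ∑' y, ∑' x, ENNReal.ofReal (N.c x y) *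
        (‖(2 / N.m0 y : ℂ) * ∑' v, (N.c y v : ℂ) * G y v - G y x‖₊ : ℝ≥0∞) ^ 2
      ≤ ∑' y, ∑' x, ENNReal.ofReal (N.c x y) *
        (ENNReal.ofReal (16 / N.m0 y) * T y + 4 * A y x) :=
        ENNReal.tsum_le_tsum fun y => ENNReal.tsum_le_tsum fun x => hpt y x
    _ = ∑' y, ((∑' x, ENNReal.ofReal (N.c x y)) * (ENNReal.ofReal (16 / N.m0 y) * T y)
          + 4 * ∑' x, ENNReal.ofReal (N.c x y) * A y x) := by
        refine tsum_congr fun y => ?_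
        calc ∑' x, ENNReal.ofReal (N.c x y) * (ENNReal.ofReal (16 / N.m0 y) * T y + 4 * A y x)
            = ∑' x, (ENNReal.ofReal (N.c x y) * (ENNReal.ofReal (16 / N.m0 y) * T y)
                + 4 * (ENNReal.ofReal (N.c x y) * A y x)) := tsum_congr fun x => by ring
          _ = (∑' x, ENNReal.ofReal (N.c x y) * (ENNReal.ofReal (16 / N.m0 y) * T y))
                + ∑' x, 4 * (ENNReal.ofReal (N.c x y) * A y x) := ENNReal.tsum_add
          _ = (∑' x, ENNReal.ofReal (N.c x y)) * (ENNReal.ofReal (16 / N.m0 y) * T y)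
                + 4 * ∑' x, ENNReal.ofReal (N.c x y) * A y x := by
              rw [ENNReal.tsum_mul_right, ENNReal.tsum_mul_left]
    _ ≤ ∑' y, (16 * T y + 4 * ∑' x, ENNReal.ofReal (N.c x y) * A y x) := by
        refine ENNReal.tsum_le_tsum fun y => add_le_add_left ?_ _
        have h1 : ∑' x, ENNReal.ofReal (N.c x y) = ENNReal.ofReal (N.m0 y) := by
          rw [show (fun x => ENNReal.ofReal (N.c x y)) = fun x => ENNReal.ofReal (N.c y x) from
            funext fun x => by rw [N.c_symm x y]]
          exact N.tsum_ofReal_c y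
        rw [h1, ← mul_assoc]
        gcongr
        rw [← ENNReal.ofReal_mul (N.m0_nonneg y)]
        have hle : N.m0 y * (16 / N.m0 y) ≤ 16 := by
          rcases eq_or_ne (N.m0 y) 0 with h | h
          · rw [h]; norm_num
          · rw [mul_comm, div_mul_eq_mul_div, mul_div_assoc, div_self h, mul_one]
        exact le_trans (ENNReal.ofReal_le_ofReal hle) (by norm_num)
    _ = 16 * N.Wgt G + 4 * N.Wgt G := by
        rw [ENNReal.tsum_add, ENNReal.tsum_mul_left, ENNReal.tsum_mul_left, hTW, hAW]
    _ = 20 * N.Wgt G := by ring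

lemma wgt_step_bwd (N : Network V) (G : V → V → ℂ) :
    N.Wgt (fun x y => (2 / N.m0 x : ℂ) * ∑' u, (N.c x u : ℂ) * G u x - G y x)
      ≤ 20 * N.Wgt G := by
  set A : V → V → ℝ≥0∞ := fun a b => (‖G a b‖₊ : ℝ≥0∞) ^ 2 with hA
  set T : V → ℝ≥0∞ := fun x => ∑' u, ENNReal.ofReal (N.c x u) * A u x with hT
  have hTW : ∑' x, T x = N.Wgt G := by
    simp only [hT]
    calc ∑' x, ∑' u, ENNReal.ofReal (N.c x u) * A u x
        = ∑' u, ∑' x, ENNReal.ofReal (N.c x u) * A u x := ENNReal.tsum_comm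
      _ = ∑' u, ∑' x, ENNReal.ofReal (N.c u x) * A u x :=
          tsum_congr fun u => tsum_congr fun x => by rw [N.c_symm x u]
      _ = N.Wgt G := (N.wgt_tsum G).symm
  rw [N.wgt_tsum]
  have hpt : ∀ x y, ENNReal.ofReal (N.c x y) *
      (‖(2 / N.m0 x : ℂ) * ∑' u, (N.c x u : ℂ) * G u x - G y x‖₊ : ℝ≥0∞) ^ 2
      ≤ ENNReal.ofReal (N.c x y) * (ENNReal.ofReal (16 / N.m0 x) * T x + 4 * A y x) := by
    intro x y
    rcases eq_or_ne (N.c x y) 0 with h0 | h0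
    · simp [h0]
    · have hadj : N.adj x y := by
        by_contra hn; exact h0 (N.c_eq_zero x y hn)
      have hm : 0 < N.m0 x := N.m0_pos hadj
      exact mul_le_mul_right (N.entry_bound hm (fun v => G v x) (G y x)) _
  calc ∑' x, ∑' y, ENNReal.ofReal (N.c x y) *
        (‖(2 / N.m0 x : ℂ) * ∑' u, (N.c x u : ℂ) * G u x - G y x‖₊ : ℝ≥0∞) ^ 2
      ≤ ∑' x, ∑' y, ENNReal.ofReal (N.c x y) *
        (ENNReal.ofReal (16 / N.m0 x) * T x + 4 * A y x) :=
        ENNReal.tsum_le_tsum fun x => ENNReal.tsum_le_tsum fun y => hpt x y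
    _ = ∑' x, ((∑' y, ENNReal.ofReal (N.c x y)) * (ENNReal.ofReal (16 / N.m0 x) * T x)
          + 4 * ∑' y, ENNReal.ofReal (N.c x y) * A y x) := by
        refine tsum_congr fun x => ?_
        calc ∑' y, ENNReal.ofReal (N.c x y) * (ENNReal.ofReal (16 / N.m0 x) * T x + 4 * A y x)
            = ∑' y, (ENNReal.ofReal (N.c x y) * (ENNReal.ofReal (16 / N.m0 x) * T x)
                + 4 * (ENNReal.ofReal (N.c x y) * A y x)) := tsum_congr fun y => by ring
          _ = (∑' y, ENNReal.ofReal (N.c x y) * (ENNReal.ofReal (16 / N.m0 x) * T x))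
                + ∑' y, 4 * (ENNReal.ofReal (N.c x y) * A y x) := ENNReal.tsum_add
          _ = (∑' y, ENNReal.ofReal (N.c x y)) * (ENNReal.ofReal (16 / N.m0 x) * T x)
                + 4 * ∑' y, ENNReal.ofReal (N.c x y) * A y x := by
              rw [ENNReal.tsum_mul_right, ENNReal.tsum_mul_left]
    _ ≤ ∑' x, (16 * T x + 4 * ∑' y, ENNReal.ofReal (N.c x y) * A y x) := by
        refine ENNReal.tsum_le_tsum fun x => add_le_add_left ?_ _
        rw [N.tsum_ofReal_c x, ← mul_assoc]
        gcongr
        rw [← ENNReal.ofReal_mul (N.m0_nonneg x)]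
        have hle : N.m0 x * (16 / N.m0 x) ≤ 16 := by
          rcases eq_or_ne (N.m0 x) 0 with h | h
          · rw [h]; norm_num
          · rw [mul_comm, div_mul_eq_mul_div, mul_div_assoc, div_self h, mul_one]
        exact le_trans (ENNReal.ofReal_le_ofReal hle) (by norm_num)
    _ = 16 * N.Wgt G + 4 * N.Wgt G := by
        rw [ENNReal.tsum_add, ENNReal.tsum_mul_left, ENNReal.tsum_mul_left, hTW]
    _ = 20 * N.Wgt G := by ring

lemma wgt_fwdExt_le (N : Network V) (f : V → V → ℝ → ℂ) (s : ℝ) :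
    ∀ n : ℕ, N.Wgt (fun a b => N.fwdExt f n a b s) ≤ 20 ^ n * N.Wgt (fun a b => f a b s) := by
  intro n
  induction n with
  | zero => simp [fwdExt]
  | succ n ih =>
      have heq : (fun a b => N.fwdExt f (n+1) a b s)
          = fun x y => (2 / N.m0 y : ℂ) *
              ∑' v, (N.c y v : ℂ) * N.fwdExt f n y v s - N.fwdExt f n y x s := by
        funext x y; simp [fwdExt]
      rw [heq]
      refine le_trans (N.wgt_step_fwd (fun a b => N.fwdExt f n a b s)) ?_
      calc 20 * N.Wgt (fun a b => N.fwdExt f n a b s)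
          ≤ 20 * (20 ^ n * N.Wgt (fun a b => f a b s)) := mul_le_mul_right ih _
        _ = 20 ^ (n+1) * N.Wgt (fun a b => f a b s) := by rw [pow_succ]; ring

lemma wgt_bwdExt_le (N : Network V) (f : V → V → ℝ → ℂ) (s : ℝ) :
    ∀ n : ℕ, N.Wgt (fun a b => N.bwdExt f n a b s) ≤ 20 ^ n * N.Wgt (fun a b => f a b s) := by
  intro n
  induction n with
  | zero => simp [bwdExt]
  | succ n ih =>
      have heq : (fun a b => N.bwdExt f (n+1) a b s)
          = fun x y => (2 / N.m0 x : ℂ) *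
              ∑' u, (N.c x u : ℂ) * N.bwdExt f n u x s - N.bwdExt f n y x s := by
        funext x y; simp [bwdExt]
      rw [heq]
      refine le_trans (N.wgt_step_bwd (fun a b => N.bwdExt f n a b s)) ?_
      calc 20 * N.Wgt (fun a b => N.bwdExt f n a b s)
          ≤ 20 * (20 ^ n * N.Wgt (fun a b => f a b s)) := mul_le_mul_right ih _
        _ = 20 ^ (n+1) * N.Wgt (fun a b => f a b s) := by rw [pow_succ]; ring

lemma summable_pair_left (N : Network V) {G : V → V → ℂ} (h : N.Wgt G ≠ ⊤) (a : V) :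
    Summable fun v => (N.c a v : ℂ) * G a v := by
  have hsl : ∑' v, ENNReal.ofReal (N.c a v) * (‖G a v‖₊ : ℝ≥0∞)^2 ≠ ⊤ := by
    refine ne_top_of_le_ne_top h ?_
    exact ENNReal.tsum_comp_le_tsum_of_injective
      (f := fun v : V => ((a, v) : V × V)) (fun v w hvw => congrArg Prod.snd hvw)
      (fun e => ENNReal.ofReal (N.c e.1 e.2) * (‖G e.1 e.2‖₊ : ℝ≥0∞)^2)
  have hsum2 : Summable fun v => ((ENNReal.ofReal (N.c a v) * (‖G a v‖₊ : ℝ≥0∞)^2).toReal) :=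
    ENNReal.summable_toReal hsl
  have hsum2' : Summable fun v => N.c a v * ‖G a v‖^2 := by
    refine hsum2.congr fun v => ?_
    rw [ENNReal.toReal_mul, ENNReal.toReal_ofReal (N.c_nonneg a v), ENNReal.toReal_pow]
    congr 2
  apply Summable.of_norm
  refine Summable.of_nonneg_of_le (fun v => norm_nonneg _) (fun v => ?_)
    (((N.c_summable a).add hsum2').div_const 2)
  rw [norm_mul, Complex.norm_real, Real.norm_of_nonneg (N.c_nonneg a v)]
  have h0 : 0 ≤ N.c a v * (1 - ‖G a v‖)^2 := mul_nonneg (N.c_nonneg a v) (sq_nonneg _)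
  nlinarith [h0]

lemma summable_pair_right (N : Network V) {G : V → V → ℂ} (h : N.Wgt G ≠ ⊤) (a : V) :
    Summable fun v => (N.c a v : ℂ) * G v a := by
  have hsl : ∑' v, ENNReal.ofReal (N.c v a) * (‖G v a‖₊ : ℝ≥0∞)^2 ≠ ⊤ := by
    refine ne_top_of_le_ne_top h ?_
    exact ENNReal.tsum_comp_le_tsum_of_injective
      (f := fun v : V => ((v, a) : V × V)) (fun v w hvw => congrArg Prod.fst hvw)
      (fun e => ENNReal.ofReal (N.c e.1 e.2) * (‖G e.1 e.2‖₊ : ℝ≥0∞)^2)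
  have hsum2 : Summable fun v => ((ENNReal.ofReal (N.c v a) * (‖G v a‖₊ : ℝ≥0∞)^2).toReal) :=
    ENNReal.summable_toReal hsl
  have hsum2' : Summable fun v => N.c v a * ‖G v a‖^2 := by
    refine hsum2.congr fun v => ?_
    rw [ENNReal.toReal_mul, ENNReal.toReal_ofReal (N.c_nonneg v a), ENNReal.toReal_pow]
    congr 2
  have hcs : Summable fun v => N.c v a := by
    refine (N.c_summable a).congr fun v => ?_
    rw [N.c_symm a v]
  apply Summable.of_norm
  refine Summable.of_nonneg_of_le (fun v => norm_nonneg _) (fun v => ?_)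
    ((hcs.add hsum2').div_const 2)
  rw [norm_mul, Complex.norm_real, Real.norm_of_nonneg (N.c_nonneg a v), N.c_symm a v]
  have h0 : 0 ≤ N.c v a * (1 - ‖G v a‖)^2 := mul_nonneg (N.c_nonneg v a) (sq_nonneg _)
  nlinarith [h0]

lemma tilde_pos (N : Network V) (f : V → V → ℝ → ℂ) {u : ℝ} (h0 : 0 < u)
    (hu : Int.fract u ≠ 0) (a b : V) :
    N.tilde f a b u = N.fwdExt f (⌊u⌋.toNat) a b (Int.fract u) := by
  rcases le_or_gt u 1 with h1 | h1
  · have hlt : u < 1 := lt_of_le_of_ne h1 (by rintro rfl; simp at hu)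
    have hf : ⌊u⌋ = 0 := Int.floor_eq_zero_iff.mpr ⟨h0.le, hlt⟩
    rw [tilde, if_pos ⟨h0.le, h1⟩, hf]
    rw [Int.fract_eq_self.mpr ⟨h0.le, hlt⟩]
    rfl
  · have hne : (⌊u⌋ : ℝ) ≠ u := by
      intro h
      exact hu (by rw [Int.fract, ← h]; simp)
    have hfl : (⌊u⌋ : ℝ) < u := lt_of_le_of_ne (Int.floor_le u) hne
    have h3 : ⌊u⌋ < ⌈u⌉ := by
      exact_mod_cast lt_of_lt_of_le hfl (Int.le_ceil u)
    have hc : ⌈u⌉ = ⌊u⌋ + 1 := le_antisymm (Int.ceil_le_floor_add_one u) h3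
    rw [tilde, if_neg (by push_neg; intro _; linarith), if_pos h1, hc]
    have : (⌊u⌋ + 1 - 1 : ℤ) = ⌊u⌋ := by ring
    rw [this]
    congr 1

lemma tilde_neg (N : Network V) (f : V → V → ℝ → ℂ) {u : ℝ} (h0 : u < 0) (a b : V) :
    N.tilde f a b u = N.bwdExt f ((-⌊u⌋).toNat) a b (Int.fract u) := by
  rw [tilde, if_neg (by push_neg; intro h; linarith), if_neg (by linarith)]
  congr 1
  push_cast
  rw [Int.fract]
  ring

lemma tilde_mid (N : Network V) (f : V → V → ℝ → ℂ) {u : ℝ} (h0 : 0 ≤ u) (h1 : u ≤ 1)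
    (a b : V) : N.tilde f a b u = f a b u := by
  rw [tilde, if_pos ⟨h0, h1⟩]

lemma fract_pos {u : ℝ} (hu : Int.fract u ≠ 0) : 0 < Int.fract u :=
  lt_of_le_of_ne (Int.fract_nonneg u) (Ne.symm hu)

lemma summable_tilde_left (N : Network V) (f : V → V → ℝ → ℂ) {u : ℝ}
    (hu : Int.fract u ≠ 0) (hW : N.Wgt (fun a b => f a b (Int.fract u)) ≠ ⊤) (a : V) :
    Summable fun v => (N.c a v : ℂ) * N.tilde f a v u := by
  have hu0 : u ≠ 0 := by rintro rfl; simp at hu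
  rcases hu0.lt_or_gt with hneg | hpos
  · have heq : ∀ v, N.tilde f a v u = N.bwdExt f ((-⌊u⌋).toNat) a v (Int.fract u) :=
      fun v => N.tilde_neg f hneg a v
    simp only [heq]
    refine N.summable_pair_left (G := fun p q => N.bwdExt f ((-⌊u⌋).toNat) p q (Int.fract u)) ?_ a
    exact ne_top_of_le_ne_top (by
        exact ENNReal.mul_ne_top (by simp) hW) (N.wgt_bwdExt_le f (Int.fract u) _)
  · have heq : ∀ v, N.tilde f a v u = N.fwdExt f (⌊u⌋.toNat) a v (Int.fract u) :=
      fun v => N.tilde_pos f hpos hu a v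
    simp only [heq]
    refine N.summable_pair_left (G := fun p q => N.fwdExt f (⌊u⌋.toNat) p q (Int.fract u)) ?_ a
    exact ne_top_of_le_ne_top (by
        exact ENNReal.mul_ne_top (by simp) hW) (N.wgt_fwdExt_le f (Int.fract u) _)

lemma summable_tilde_right (N : Network V) (f : V → V → ℝ → ℂ) {u : ℝ}
    (hu : Int.fract u ≠ 0) (hW : N.Wgt (fun a b => f a b (Int.fract u)) ≠ ⊤) (a : V) :
    Summable fun v => (N.c a v : ℂ) * N.tilde f v a u := by
  have hu0 : u ≠ 0 := by rintro rfl; simp at hu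
  rcases hu0.lt_or_gt with hneg | hpos
  · have heq : ∀ v, N.tilde f v a u = N.bwdExt f ((-⌊u⌋).toNat) v a (Int.fract u) :=
      fun v => N.tilde_neg f hneg v a
    simp only [heq]
    refine N.summable_pair_right (G := fun p q => N.bwdExt f ((-⌊u⌋).toNat) p q (Int.fract u)) ?_ a
    exact ne_top_of_le_ne_top (by
        exact ENNReal.mul_ne_top (by simp) hW) (N.wgt_bwdExt_le f (Int.fract u) _)
  · have heq : ∀ v, N.tilde f v a u = N.fwdExt f (⌊u⌋.toNat) v a (Int.fract u) :=
      fun v => N.tilde_pos f hpos hu v a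
    simp only [heq]
    refine N.summable_pair_right (G := fun p q => N.fwdExt f (⌊u⌋.toNat) p q (Int.fract u)) ?_ a
    exact ne_top_of_le_ne_top (by
        exact ENNReal.mul_ne_top (by simp) hW) (N.wgt_fwdExt_le f (Int.fract u) _)

lemma step_fwd (N : Network V) (f : V → V → ℝ → ℂ) {x y : V} (hxy : N.adj x y) {u : ℝ}
    (hu : Int.fract u ≠ 0)
    (hs : Summable fun v => (N.c y v : ℂ) * N.tilde f v y (u + 1)) :
    N.tilde f x y (u + 1)
      = (2 / N.m0 y : ℂ) * ∑' v, (N.c y v : ℂ) * N.tilde f y v u - N.tilde f y x u := by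
  have hu0 : u ≠ 0 := by rintro rfl; simp at hu
  have hfr : Int.fract (u + 1) = Int.fract u := Int.fract_add_one u
  have hm0 : (N.m0 y : ℂ) ≠ 0 :=
    Complex.ofReal_ne_zero.mpr (N.m0_pos (N.adj_symm x y hxy)).ne'
  rcases hu0.lt_or_gt with hneg | hpos
  · -- u < 0
    set s := Int.fract u with hsdef
    have hm1 : ⌊u⌋ < 0 := Int.floor_lt.mpr (by exact_mod_cast hneg)
    obtain ⟨m', hm'⟩ : ∃ m' : ℕ, (-⌊u⌋).toNat = m' + 1 := ⟨(-⌊u⌋ - 1).toNat, by omega⟩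
    have hu_eq : ∀ a b, N.tilde f a b u = N.bwdExt f (m' + 1) a b s := by
      intro a b; rw [N.tilde_neg f hneg a b, hm']
    have hu1_eq : ∀ a b, N.tilde f a b (u + 1) = N.bwdExt f m' a b s := by
      intro a b
      rcases lt_trichotomy (u + 1) 0 with h | h | h
      · rw [N.tilde_neg f h a b]
        have hidx : (-⌊u + 1⌋).toNat = m' := by rw [Int.floor_add_one]; omega
        rw [hidx, hfr]
      · exfalso
        apply hu
        rw [hsdef, show u = ((-1 : ℤ) : ℝ) by push_cast; linarith]
        exact Int.fract_intCast _
      · have hle : u + 1 < 1 := by linarith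
        rw [N.tilde_mid f h.le hle.le a b]
        have hfl : ⌊u⌋ = -1 := by
          have h2 : ((-1 : ℤ) : ℝ) ≤ u := by push_cast; linarith
          have h3 : (-1 : ℤ) ≤ ⌊u⌋ := Int.le_floor.mpr h2
          omega
        have hm'0 : m' = 0 := by omega
        have hs_eq : s = u + 1 := by
          rw [hsdef, Int.fract, hfl]; push_cast; ring
        rw [hm'0, hs_eq]
        rfl
    set K : ℂ := ∑' w, (N.c y w : ℂ) * N.bwdExt f m' w y s with hK
    have hexp : ∀ v, N.bwdExt f (m' + 1) y v s
        = (2 / N.m0 y : ℂ) * K - N.bwdExt f m' v y s := fun v => rfl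
    have hsum_const : Summable fun v => (N.c y v : ℂ) * ((2 / N.m0 y : ℂ) * K) :=
      (N.summable_c_complex y).mul_right _
    have hs' : Summable fun v => (N.c y v : ℂ) * N.bwdExt f m' v y s :=
      hs.congr fun v => by rw [hu1_eq v y]
    have hSig : ∑' v, (N.c y v : ℂ) * N.tilde f y v u = K := by
      calc ∑' v, (N.c y v : ℂ) * N.tilde f y v u
          = ∑' v, ((N.c y v : ℂ) * ((2 / N.m0 y : ℂ) * K)
              - (N.c y v : ℂ) * N.bwdExt f m' v y s) :=
            tsum_congr fun v => by rw [hu_eq y v, hexp v]; ring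
        _ = (∑' v, (N.c y v : ℂ) * ((2 / N.m0 y : ℂ) * K))
              - ∑' v, (N.c y v : ℂ) * N.bwdExt f m' v y s :=
            hsum_const.tsum_sub hs'
        _ = (N.m0 y : ℂ) * ((2 / N.m0 y : ℂ) * K) - K := by
            rw [tsum_mul_right, N.tsum_c_complex y, ← hK]
        _ = 2 * K - K := by
            congr 1
            field_simp
        _ = K := by ring
    rw [hu1_eq x y, hSig, hu_eq y x, hexp x]
    ring
  · -- 0 < u
    set s := Int.fract u with hsdef
    set n := ⌊u⌋.toNat with hn
    have hflnn : 0 ≤ ⌊u⌋ := Int.floor_nonneg.mpr hpos.le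
    have hfl : ⌊u + 1⌋.toNat = n + 1 := by
      rw [Int.floor_add_one, hn]; omega
    have hpos1 : 0 < u + 1 := by linarith
    have hfr1 : Int.fract (u + 1) ≠ 0 := by rw [hfr]; exact hu
    have h1 : N.tilde f x y (u + 1) = N.fwdExt f (n + 1) x y s := by
      rw [N.tilde_pos f hpos1 hfr1, hfl, hfr]
    have h2 : ∀ a b, N.tilde f a b u = N.fwdExt f n a b s := fun a b =>
      N.tilde_pos f hpos hu a b
    rw [h1]
    have hdef : N.fwdExt f (n + 1) x y s
        = (2 / N.m0 y : ℂ) * ∑' v, (N.c y v : ℂ) * N.fwdExt f n y v s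
          - N.fwdExt f n y x s := rfl
    rw [hdef]
    have hts : ∑' v, (N.c y v : ℂ) * N.tilde f y v u
        = ∑' v, (N.c y v : ℂ) * N.fwdExt f n y v s :=
      tsum_congr fun v => by rw [h2 y v]
    rw [hts, h2 y x]

lemma step_bwd (N : Network V) (f : V → V → ℝ → ℂ) {x y : V} (hxy : N.adj x y) {u : ℝ}
    (hu : Int.fract u ≠ 0)
    (hs : Summable fun w => (N.c x w : ℂ) * N.tilde f x w (u - 1)) :
    N.tilde f x y (u - 1)
      = (2 / N.m0 x : ℂ) * ∑' w, (N.c x w : ℂ) * N.tilde f w x u - N.tilde f y x u := by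
  have hu0 : u ≠ 0 := by rintro rfl; simp at hu
  have hfr : Int.fract (u - 1) = Int.fract u := by
    rw [show u - 1 = u + ((-1 : ℤ) : ℝ) by push_cast; ring, Int.fract_add_intCast]
  have hm0 : (N.m0 x : ℂ) ≠ 0 := Complex.ofReal_ne_zero.mpr (N.m0_pos hxy).ne'
  have hu1 : u ≠ 1 := by
    rintro rfl
    simp at hu
  rcases lt_trichotomy u 1 with h | h | h
  · -- u < 1
    set s := Int.fract u with hsdef
    set m := (-⌊u⌋).toNat with hm
    have hflnn : ⌊u⌋ ≤ 0 := by
      by_contra hh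
      push_neg at hh
      have h2 : ((1 : ℤ) : ℝ) ≤ u := le_trans (by exact_mod_cast hh) (Int.floor_le u)
      push_cast at h2
      linarith
    have hmain : ∀ a b, N.tilde f a b u = N.bwdExt f m a b s := by
      intro a b
      rcases lt_trichotomy u 0 with hneg | h0 | hpos
      · rw [N.tilde_neg f hneg a b]
      · exact absurd h0 hu0
      · have hfl0 : ⌊u⌋ = 0 := Int.floor_eq_zero_iff.mpr ⟨hpos.le, h⟩
        have hmz : m = 0 := by rw [hm, hfl0]; rfl
        have hs_eq : s = u := by rw [hsdef]; exact Int.fract_eq_self.mpr ⟨hpos.le, h⟩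
        rw [N.tilde_mid f hpos.le h.le a b, hmz, hs_eq]
        rfl
    have hum1 : u - 1 < 0 := by linarith
    have hidx : (-⌊u - 1⌋).toNat = m + 1 := by
      rw [show u - 1 = u + ((-1 : ℤ) : ℝ) by push_cast; ring, Int.floor_add_intCast, hm]; omega
    have h1 : N.tilde f x y (u - 1) = N.bwdExt f (m + 1) x y s := by
      rw [N.tilde_neg f hum1 x y, hidx, hfr]
    rw [h1]
    have hdef : N.bwdExt f (m + 1) x y s
        = (2 / N.m0 x : ℂ) * ∑' w, (N.c x w : ℂ) * N.bwdExt f m w x s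
          - N.bwdExt f m y x s := rfl
    rw [hdef]
    have hts : ∑' w, (N.c x w : ℂ) * N.tilde f w x u
        = ∑' w, (N.c x w : ℂ) * N.bwdExt f m w x s :=
      tsum_congr fun w => by rw [hmain w x]
    rw [hts, hmain y x]
  · exact absurd h hu1
  · -- 1 < u
    set s := Int.fract u with hsdef
    have hfl1 : 1 ≤ ⌊u⌋ := Int.le_floor.mpr (by push_cast; linarith)
    obtain ⟨n', hn'⟩ : ∃ n' : ℕ, ⌊u⌋.toNat = n' + 1 := ⟨(⌊u⌋ - 1).toNat, by omega⟩
    have hmain : ∀ a b, N.tilde f a b u = N.fwdExt f (n' + 1) a b s := by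
      intro a b; rw [N.tilde_pos f (by linarith) hu a b, hn']
    have hum1 : 0 < u - 1 := by linarith
    have hfr1 : Int.fract (u - 1) ≠ 0 := by rw [hfr]; exact hu
    have hidx : ⌊u - 1⌋.toNat = n' := by
      rw [show u - 1 = u + ((-1 : ℤ) : ℝ) by push_cast; ring, Int.floor_add_intCast]; omega
    have h1 : ∀ a b, N.tilde f a b (u - 1) = N.fwdExt f n' a b s := by
      intro a b; rw [N.tilde_pos f hum1 hfr1 a b, hidx, hfr]
    set K : ℂ := ∑' v, (N.c x v : ℂ) * N.fwdExt f n' x v s with hK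
    have hexp : ∀ w, N.fwdExt f (n' + 1) w x s
        = (2 / N.m0 x : ℂ) * K - N.fwdExt f n' x w s := fun w => rfl
    have hs' : Summable fun w => (N.c x w : ℂ) * N.fwdExt f n' x w s :=
      hs.congr fun w => by rw [h1 x w]
    have hsum_const : Summable fun w => (N.c x w : ℂ) * ((2 / N.m0 x : ℂ) * K) :=
      (N.summable_c_complex x).mul_right _
    have hSig : ∑' w, (N.c x w : ℂ) * N.tilde f w x u = K := by
      calc ∑' w, (N.c x w : ℂ) * N.tilde f w x u
          = ∑' w, ((N.c x w : ℂ) * ((2 / N.m0 x : ℂ) * K)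
              - (N.c x w : ℂ) * N.fwdExt f n' x w s) :=
            tsum_congr fun w => by rw [hmain w x, hexp w]; ring
        _ = (∑' w, (N.c x w : ℂ) * ((2 / N.m0 x : ℂ) * K))
              - ∑' w, (N.c x w : ℂ) * N.fwdExt f n' x w s :=
            hsum_const.tsum_sub hs'
        _ = (N.m0 x : ℂ) * ((2 / N.m0 x : ℂ) * K) - K := by
            rw [tsum_mul_right, N.tsum_c_complex x, ← hK]
        _ = 2 * K - K := by
            congr 1
            field_simp
        _ = K := by ring
    rw [h1 x y, hSig, hmain y x, hexp y]
    ring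

lemma key_identity (N : Network V) (f g : V → V → ℝ → ℂ) (τ : ℝ) {x y : V}
    (hxy : N.adj x y) {t : ℝ} (ht0 : 0 < t) (ht1 : t < 1)
    (hg : ∀ a b, N.c a b ≠ 0 → g a b t = N.dAlembertFun f τ a b t)
    (h1 : Int.fract (t + τ) ≠ 0)
    (hW1 : N.Wgt (fun a b => f a b (Int.fract (t + τ))) ≠ ⊤)
    (h2 : Int.fract (t - τ) ≠ 0)
    (hW2 : N.Wgt (fun a b => f a b (Int.fract (t - τ))) ≠ ⊤) :
    N.dAlembertFun f (τ + 1) x y t + N.dAlembertFun f (τ - 1) x y t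
      = 2 * N.dAlembertFun g 1 x y t := by
  have hyx : N.adj y x := N.adj_symm x y hxy
  have hcxy : N.c x y ≠ 0 := (N.c_pos x y hxy).ne'
  have hcyx : N.c y x ≠ 0 := (N.c_pos y x hyx).ne'
  set u₁ := t + τ with hu₁
  set u₂ := t - τ with hu₂
  -- summability facts
  have hfrs1 : Int.fract (u₁ + 1) = Int.fract u₁ := Int.fract_add_one u₁
  have hfrs2 : Int.fract (u₂ + 1) = Int.fract u₂ := Int.fract_add_one u₂
  have hfrm1 : Int.fract (u₁ - 1) = Int.fract u₁ := by
    rw [show u₁ - 1 = u₁ + ((-1 : ℤ) : ℝ) by push_cast; ring, Int.fract_add_intCast]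
  have hfrm2 : Int.fract (u₂ - 1) = Int.fract u₂ := by
    rw [show u₂ - 1 = u₂ + ((-1 : ℤ) : ℝ) by push_cast; ring, Int.fract_add_intCast]
  have Sa₁ : Summable fun v => (N.c y v : ℂ) * N.tilde f y v u₁ :=
    N.summable_tilde_left f h1 hW1 y
  have Sa₂ : Summable fun v => (N.c y v : ℂ) * N.tilde f y v u₂ :=
    N.summable_tilde_left f h2 hW2 y
  have Sb₁ : Summable fun w => (N.c x w : ℂ) * N.tilde f w x u₁ :=
    N.summable_tilde_right f h1 hW1 x
  have Sb₂ : Summable fun w => (N.c x w : ℂ) * N.tilde f w x u₂ :=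
    N.summable_tilde_right f h2 hW2 x
  have Sc₁ : Summable fun v => (N.c y v : ℂ) * N.tilde f v y (u₁ + 1) :=
    N.summable_tilde_right f (by rw [hfrs1]; exact h1) (by rw [hfrs1]; exact hW1) y
  have Sc₂ : Summable fun v => (N.c y v : ℂ) * N.tilde f v y (u₂ + 1) :=
    N.summable_tilde_right f (by rw [hfrs2]; exact h2) (by rw [hfrs2]; exact hW2) y
  have Sd₁ : Summable fun w => (N.c x w : ℂ) * N.tilde f x w (u₁ - 1) :=
    N.summable_tilde_left f (by rw [hfrm1]; exact h1) (by rw [hfrm1]; exact hW1) x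
  have Sd₂ : Summable fun w => (N.c x w : ℂ) * N.tilde f x w (u₂ - 1) :=
    N.summable_tilde_left f (by rw [hfrm2]; exact h2) (by rw [hfrm2]; exact hW2) x
  -- step identities
  have E1 := N.step_fwd f hxy h1 Sc₁
  have E2 := N.step_fwd f hxy h2 Sc₂
  have E3 := N.step_bwd f hxy h1 Sd₁
  have E4 := N.step_bwd f hxy h2 Sd₂
  -- unfold the right-hand side
  have htfr : Int.fract t = t := Int.fract_eq_self.mpr ⟨ht0.le, ht1⟩
  have hRA : N.tilde g x y (t + 1)
      = (2 / N.m0 y : ℂ) * ∑' v, (N.c y v : ℂ) * g y v t - g y x t := by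
    have hfr : Int.fract (t + 1) = t := by rw [Int.fract_add_one, htfr]
    have hfl : ⌊t + 1⌋.toNat = 1 := by
      rw [Int.floor_add_one, Int.floor_eq_zero_iff.mpr ⟨ht0.le, ht1⟩]
      rfl
    rw [N.tilde_pos g (by linarith) (by rw [hfr]; exact ht0.ne') x y, hfl, hfr]
    rfl
  have hRB : N.tilde g x y (t - 1)
      = (2 / N.m0 x : ℂ) * ∑' w, (N.c x w : ℂ) * g w x t - g y x t := by
    have hfr : Int.fract (t - 1) = t := by
      rw [show t - 1 = t + ((-1 : ℤ) : ℝ) by push_cast; ring, Int.fract_add_intCast, htfr]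
    have hfl : (-⌊t - 1⌋).toNat = 1 := by
      rw [show t - 1 = t + ((-1 : ℤ) : ℝ) by push_cast; ring, Int.floor_add_intCast,
        Int.floor_eq_zero_iff.mpr ⟨ht0.le, ht1⟩]
      rfl
    rw [N.tilde_neg g (by linarith) x y, hfl, hfr]
    rfl
  -- replace g by the d'Alembert mean of f
  have hgd : ∀ a b, (N.c a b : ℂ) * g a b t
      = (N.c a b : ℂ) * ((N.tilde f a b u₁ + N.tilde f a b u₂) / 2) := by
    intro a b
    rcases eq_or_ne (N.c a b) 0 with h | h
    · rw [h]; push_cast; ring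
    · rw [hg a b h]; rfl
  have hgd2 : ∀ a b, (N.c a b : ℂ) * g b a t
      = (N.c a b : ℂ) * ((N.tilde f b a u₁ + N.tilde f b a u₂) / 2) := by
    intro a b
    rcases eq_or_ne (N.c a b) 0 with h | h
    · rw [h]; push_cast; ring
    · have h' : N.c b a ≠ 0 := by rw [N.c_symm b a]; exact h
      rw [hg b a h']; rfl
  have hgyx : g y x t = (N.tilde f y x u₁ + N.tilde f y x u₂) / 2 := by
    rw [hg y x hcyx]; rfl
  have hsum1 : ∑' v, (N.c y v : ℂ) * g y v t
      = ((∑' v, (N.c y v : ℂ) * N.tilde f y v u₁)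
          + ∑' v, (N.c y v : ℂ) * N.tilde f y v u₂) / 2 := by
    calc ∑' v, (N.c y v : ℂ) * g y v t
        = ∑' v, ((N.c y v : ℂ) * N.tilde f y v u₁ / 2
            + (N.c y v : ℂ) * N.tilde f y v u₂ / 2) :=
          tsum_congr fun v => by rw [hgd y v]; ring
      _ = (∑' v, (N.c y v : ℂ) * N.tilde f y v u₁ / 2)
            + ∑' v, (N.c y v : ℂ) * N.tilde f y v u₂ / 2 :=
          Summable.tsum_add (Sa₁.div_const 2) (Sa₂.div_const 2)
      _ = ((∑' v, (N.c y v : ℂ) * N.tilde f y v u₁)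
            + ∑' v, (N.c y v : ℂ) * N.tilde f y v u₂) / 2 := by
          rw [tsum_div_const, tsum_div_const]; ring
  have hsum2 : ∑' w, (N.c x w : ℂ) * g w x t
      = ((∑' w, (N.c x w : ℂ) * N.tilde f w x u₁)
          + ∑' w, (N.c x w : ℂ) * N.tilde f w x u₂) / 2 := by
    calc ∑' w, (N.c x w : ℂ) * g w x t
        = ∑' w, ((N.c x w : ℂ) * N.tilde f w x u₁ / 2
            + (N.c x w : ℂ) * N.tilde f w x u₂ / 2) :=
          tsum_congr fun w => by rw [hgd2 x w]; ring
      _ = (∑' w, (N.c x w : ℂ) * N.tilde f w x u₁ / 2)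
            + ∑' w, (N.c x w : ℂ) * N.tilde f w x u₂ / 2 :=
          Summable.tsum_add (Sb₁.div_const 2) (Sb₂.div_const 2)
      _ = ((∑' w, (N.c x w : ℂ) * N.tilde f w x u₁)
            + ∑' w, (N.c x w : ℂ) * N.tilde f w x u₂) / 2 := by
          rw [tsum_div_const, tsum_div_const]; ring
  -- assemble
  have hL1 : t + (τ + 1) = u₁ + 1 := by rw [hu₁]; ring
  have hL2 : t - (τ + 1) = u₂ - 1 := by rw [hu₂]; ring
  have hL3 : t + (τ - 1) = u₁ - 1 := by rw [hu₁]; ring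
  have hL4 : t - (τ - 1) = u₂ + 1 := by rw [hu₂]; ring
  rw [dAlembertFun, dAlembertFun, dAlembertFun, hL1, hL2, hL3, hL4, hRA, hRB,
    hsum1, hsum2, hgyx, E1, E2, E3, E4]
  ring


lemma comp_ae (N : Network V) {S : Set ((V × V) × ℝ)} (hS : N.edgeMeasure S = 0)
    (e : V × V) (he : N.c e.1 e.2 ≠ 0) :
    ∀ᵐ t ∂(volume.restrict (Set.Ioo (0:ℝ) 1)), (e, t) ∉ S := by
  obtain ⟨T, hST, hTm, hT0⟩ := exists_measurable_superset_of_null hS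
  have h0 : (∑' e' : V × V, (Measure.map (fun t => (e', t))
      ((ENNReal.ofReal (N.c e'.1 e'.2 / 2)) • (volume.restrict (Set.Ioo (0:ℝ) 1)))) T) = 0 := by
    rw [← Measure.sum_apply _ hTm]
    exact hT0
  have h1 := (ENNReal.tsum_eq_zero.mp h0) e
  rw [Measure.map_apply measurable_prodMk_left hTm, Measure.smul_apply, smul_eq_mul,
    mul_eq_zero] at h1
  have hc2 : ENNReal.ofReal (N.c e.1 e.2 / 2) ≠ 0 := by
    rw [Ne, ENNReal.ofReal_eq_zero, not_le]
    have := lt_of_le_of_ne (N.c_nonneg e.1 e.2) (Ne.symm he)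
    linarith
  rcases h1 with h1 | h1
  · exact absurd h1 hc2
  · have h2 := measure_eq_zero_iff_ae_notMem.mp h1
    filter_upwards [h2] with t ht
    exact fun hmem => ht (hST hmem)

lemma ae_edge_of_ae_slices (N : Network V) {Q : ((V × V) × ℝ) → Prop}
    (h : ∀ e : V × V, N.c e.1 e.2 ≠ 0 →
      ∀ᵐ t ∂(volume.restrict (Set.Ioo (0:ℝ) 1)), Q (e, t)) :
    ∀ᵐ p ∂N.edgeMeasure, Q p := by
  classical
  have hU : ∀ e : V × V, ∃ U : Set ℝ, MeasurableSet U ∧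
      {t : ℝ | ¬ Q (e, t)} ⊆ U ∧
      (N.c e.1 e.2 ≠ 0 → (volume.restrict (Set.Ioo (0:ℝ) 1)) U = 0) := by
    intro e
    by_cases he : N.c e.1 e.2 = 0
    · exact ⟨Set.univ, MeasurableSet.univ, Set.subset_univ _, fun h' => absurd he h'⟩
    · obtain ⟨U, hsub, hUm, hU0⟩ := exists_measurable_superset_of_null (ae_iff.mp (h e he))
      exact ⟨U, hUm, hsub, fun _ => hU0⟩
  choose U hUm hUsub hU0 using hU
  set T : Set ((V × V) × ℝ) := {p | p.2 ∈ U p.1} with hTdef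
  have hTm : MeasurableSet T := by
    have hTeq : T = ⋃ e : V × V, ((Prod.fst ⁻¹' {e}) ∩ (Prod.snd ⁻¹' U e)) := by
      ext p
      simp only [hTdef, Set.mem_setOf_eq, Set.mem_iUnion, Set.mem_inter_iff, Set.mem_preimage,
        Set.mem_singleton_iff]
      constructor
      · intro hp; exact ⟨p.1, rfl, hp⟩
      · rintro ⟨e, he, hp⟩; rwa [he]
    rw [hTeq]
    exact MeasurableSet.iUnion fun e =>
      (measurable_fst (MeasurableSet.singleton e)).inter (measurable_snd (hUm e))
  have hsub : {p | ¬ Q p} ⊆ T := by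
    intro p hp
    have hmem : p.2 ∈ {t : ℝ | ¬ Q (p.1, t)} := by
      simp only [Set.mem_setOf_eq, Prod.mk.eta]
      exact hp
    exact hUsub p.1 hmem
  rw [ae_iff]
  refine measure_mono_null hsub ?_
  rw [show N.edgeMeasure = Measure.sum (fun e : V × V => Measure.map (fun t => (e, t))
      ((ENNReal.ofReal (N.c e.1 e.2 / 2)) • (volume.restrict (Set.Ioo (0:ℝ) 1)))) from rfl,
    Measure.sum_apply _ hTm]
  refine ENNReal.tsum_eq_zero.mpr fun e => ?_
  rw [Measure.map_apply measurable_prodMk_left hTm, Measure.smul_apply, smul_eq_mul]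
  rcases eq_or_ne (N.c e.1 e.2) 0 with he | he
  · rw [he]
    norm_num
  · have hpre : (fun t : ℝ => (e, t)) ⁻¹' T = U e := by
      ext t
      simp [hTdef]
    rw [hpre, hU0 e he, mul_zero]

lemma ae_edge_basic (N : Network V) :
    ∀ᵐ p ∂N.edgeMeasure, N.c p.1.1 p.1.2 ≠ 0 ∧ p.2 ∈ Set.Ioo (0:ℝ) 1 := by
  refine N.ae_edge_of_ae_slices fun e he => ?_
  filter_upwards [ae_restrict_mem measurableSet_Ioo] with t ht
  exact ⟨he, ht⟩

lemma ae_W (N : Network V) (F : Lp ℂ 2 N.edgeMeasure) :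
    ∀ᵐ s ∂(volume.restrict (Set.Ioo (0:ℝ) 1)),
      N.Wgt (fun a b => (F : Lp ℂ 2 N.edgeMeasure) ((a, b), s)) ≠ ⊤ := by
  obtain ⟨φ, hφm, hφeq⟩ := (Lp.aestronglyMeasurable F)
  have hφmeas : Measurable φ := hφm.measurable
  have hslice : ∀ e : V × V, N.c e.1 e.2 ≠ 0 →
      (fun t => (F : Lp ℂ 2 N.edgeMeasure) (e, t))
        =ᵐ[volume.restrict (Set.Ioo (0:ℝ) 1)] (fun t => φ (e, t)) := by
    intro e he
    have hS : N.edgeMeasure {p | ¬ ((F : Lp ℂ 2 N.edgeMeasure) p = φ p)} = 0 := ae_iff.mp hφeq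
    filter_upwards [N.comp_ae hS e he] with t ht
    by_contra hne
    exact ht hne
  have haem : ∀ e : V × V, AEMeasurable
      (fun s : ℝ => ENNReal.ofReal (N.c e.1 e.2) *
        (‖(F : Lp ℂ 2 N.edgeMeasure) ((e.1, e.2), s)‖₊ : ℝ≥0∞) ^ 2)
      (volume.restrict (Set.Ioo (0:ℝ) 1)) := by
    intro e
    rcases eq_or_ne (N.c e.1 e.2) 0 with he | he
    · have hzero : (fun s : ℝ => ENNReal.ofReal (N.c e.1 e.2) *
          (‖(F : Lp ℂ 2 N.edgeMeasure) ((e.1, e.2), s)‖₊ : ℝ≥0∞) ^ 2) = fun _ => 0 := by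
        funext s
        rw [he]
        simp
      rw [hzero]
      exact aemeasurable_const
    · have hmφ : Measurable fun s : ℝ => ENNReal.ofReal (N.c e.1 e.2) *
          (‖φ (e, s)‖₊ : ℝ≥0∞) ^ 2 :=
        (((hφmeas.comp measurable_prodMk_left).enorm).pow_const 2).const_mul _
      refine hmφ.aemeasurable.congr ?_
      filter_upwards [hslice e he] with t ht
      rw [Prod.mk.eta, ht]
  have hmem := Lp.memLp F
  have hsn := hmem.eLpNorm_lt_top
  rw [eLpNorm_eq_lintegral_rpow_enorm_toReal (by norm_num) (by norm_num)] at hsn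
  have h2 : (2 : ℝ≥0∞).toReal = 2 := by norm_num
  rw [h2] at hsn
  have hfin : (∫⁻ p, (‖(F : Lp ℂ 2 N.edgeMeasure) p‖₊ : ℝ≥0∞) ^ (2:ℝ) ∂N.edgeMeasure) ≠ ⊤ := by
    intro hcon
    simp only [enorm_eq_nnnorm] at hsn
    rw [hcon] at hsn
    simp [ENNReal.top_rpow_of_pos] at hsn
  have hfin2 : (∫⁻ p, (‖(F : Lp ℂ 2 N.edgeMeasure) p‖₊ : ℝ≥0∞) ^ 2 ∂N.edgeMeasure) ≠ ⊤ := by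
    refine fun hcon => hfin ?_
    rw [← hcon]
    refine lintegral_congr fun p => ?_
    rw [← ENNReal.rpow_natCast]
    norm_num
  have hI : (∫⁻ p, (‖(F : Lp ℂ 2 N.edgeMeasure) p‖₊ : ℝ≥0∞) ^ 2 ∂N.edgeMeasure)
      = ∑' e : V × V, ENNReal.ofReal (N.c e.1 e.2 / 2) *
          ∫⁻ s in Set.Ioo (0:ℝ) 1, (‖(F : Lp ℂ 2 N.edgeMeasure) (e, s)‖₊ : ℝ≥0∞) ^ 2 := by
    have e1 : (∫⁻ p, (‖(F : Lp ℂ 2 N.edgeMeasure) p‖₊ : ℝ≥0∞) ^ 2 ∂N.edgeMeasure)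
        = ∑' e : V × V, ∫⁻ p, (‖(F : Lp ℂ 2 N.edgeMeasure) p‖₊ : ℝ≥0∞) ^ 2
            ∂(Measure.map (fun t : ℝ => (e, t))
              ((ENNReal.ofReal (N.c e.1 e.2 / 2)) • (volume.restrict (Set.Ioo (0:ℝ) 1)))) :=
      lintegral_sum_measure _ _
    rw [e1]
    refine tsum_congr fun e => ?_
    have haem2 : AEMeasurable (fun p => (‖(F : Lp ℂ 2 N.edgeMeasure) p‖₊ : ℝ≥0∞) ^ 2)
        (Measure.map (fun t : ℝ => (e, t))
          ((ENNReal.ofReal (N.c e.1 e.2 / 2)) • (volume.restrict (Set.Ioo (0:ℝ) 1)))) := by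
      refine AEMeasurable.pow_const ?_ 2
      refine AEMeasurable.enorm (f := fun p => (F : Lp ℂ 2 N.edgeMeasure) p) ?_
      exact (Lp.aestronglyMeasurable F).aemeasurable.mono_measure
        (Measure.le_sum (fun e : V × V => Measure.map (fun t => (e, t))
          ((ENNReal.ofReal (N.c e.1 e.2 / 2)) • (volume.restrict (Set.Ioo (0:ℝ) 1)))) e)
    rw [lintegral_map' haem2 measurable_prodMk_left.aemeasurable, lintegral_smul_measure, smul_eq_mul]
  have hWint : (∫⁻ s in Set.Ioo (0:ℝ) 1,
        N.Wgt (fun a b => (F : Lp ℂ 2 N.edgeMeasure) ((a, b), s))) ≠ ⊤ := by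
    have hrw : (∫⁻ s in Set.Ioo (0:ℝ) 1,
          N.Wgt (fun a b => (F : Lp ℂ 2 N.edgeMeasure) ((a, b), s)))
        = ∑' e : V × V, ∫⁻ s in Set.Ioo (0:ℝ) 1, ENNReal.ofReal (N.c e.1 e.2) *
            (‖(F : Lp ℂ 2 N.edgeMeasure) ((e.1, e.2), s)‖₊ : ℝ≥0∞) ^ 2 := by
      rw [← lintegral_tsum haem]
      rfl
    rw [hrw]
    have hterm : ∀ e : V × V, (∫⁻ s in Set.Ioo (0:ℝ) 1, ENNReal.ofReal (N.c e.1 e.2) *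
          (‖(F : Lp ℂ 2 N.edgeMeasure) ((e.1, e.2), s)‖₊ : ℝ≥0∞) ^ 2)
        = 2 * (ENNReal.ofReal (N.c e.1 e.2 / 2) *
            ∫⁻ s in Set.Ioo (0:ℝ) 1, (‖(F : Lp ℂ 2 N.edgeMeasure) (e, s)‖₊ : ℝ≥0∞) ^ 2) := by
      intro e
      rcases eq_or_ne (N.c e.1 e.2) 0 with he | he
      · rw [he]
        simp
      · have hc : ENNReal.ofReal (N.c e.1 e.2) = 2 * ENNReal.ofReal (N.c e.1 e.2 / 2) := by
          rw [show (2:ℝ≥0∞) = ENNReal.ofReal 2 by norm_num,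
            ← ENNReal.ofReal_mul (by norm_num : (0:ℝ) ≤ 2)]
          congr 1
          ring
        have haem3 : AEMeasurable
            (fun s : ℝ => (‖(F : Lp ℂ 2 N.edgeMeasure) (e, s)‖₊ : ℝ≥0∞) ^ 2)
            (volume.restrict (Set.Ioo (0:ℝ) 1)) := by
          have hmφ : Measurable fun s : ℝ => (‖φ (e, s)‖₊ : ℝ≥0∞) ^ 2 :=
            ((hφmeas.comp measurable_prodMk_left).enorm).pow_const 2
          refine hmφ.aemeasurable.congr ?_
          filter_upwards [hslice e he] with t ht
          rw [ht]
        rw [← lintegral_const_mul'' _ haem3,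
          ← lintegral_const_mul'' _ (haem3.const_mul (ENNReal.ofReal (N.c e.1 e.2 / 2)))]
        refine lintegral_congr fun s => ?_
        rw [hc, mul_assoc]
    rw [tsum_congr hterm, ENNReal.tsum_mul_left, ← hI]
    exact ENNReal.mul_ne_top (by norm_num) hfin2
  have hae := ae_lt_top' (AEMeasurable.ennreal_tsum haem) hWint
  filter_upwards [hae] with s hs
  exact hs.ne

lemma null_preimage_add {S : Set ℝ} (h : volume S = 0) (a : ℝ) :
    volume ((fun x : ℝ => x + a) ⁻¹' S) = 0 := by
  obtain ⟨T, hST, hTm, hT0⟩ := exists_measurable_superset_of_null h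
  refine measure_mono_null (Set.preimage_mono hST) ?_
  rw [(measurePreserving_add_right volume a).measure_preimage hTm.nullMeasurableSet]
  exact hT0

lemma ae_good_shift (N : Network V) (F : Lp ℂ 2 N.edgeMeasure) (τ' : ℝ) :
    ∀ᵐ t ∂(volume.restrict (Set.Ioo (0:ℝ) 1)),
      Int.fract (t + τ') ≠ 0 ∧
      N.Wgt (fun a b => (F : Lp ℂ 2 N.edgeMeasure) ((a, b), Int.fract (t + τ'))) ≠ ⊤ := by
  have hW := N.ae_W F
  set B : Set ℝ := {s | ¬ (N.Wgt (fun a b =>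
      (F : Lp ℂ 2 N.edgeMeasure) ((a, b), s)) ≠ ⊤)} with hB
  have hBnull : volume (B ∩ Set.Ioo (0:ℝ) 1) = 0 := by
    have h0 := ae_iff.mp hW
    rwa [Measure.restrict_apply' measurableSet_Ioo] at h0
  set Bad : Set ℝ := {u | ¬ (Int.fract u ≠ 0 ∧
      N.Wgt (fun a b => (F : Lp ℂ 2 N.edgeMeasure) ((a, b), Int.fract u)) ≠ ⊤)} with hBad
  have hBadnull : volume Bad = 0 := by
    have hsub : Bad ⊆ (⋃ k : ℤ, {((k : ℝ))}) ∪
        ⋃ k : ℤ, ((fun x : ℝ => x + (k : ℝ)) ⁻¹' (B ∩ Set.Ioo 0 1)) := by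
      intro u hu
      by_cases hf : Int.fract u = 0
      · left
        refine Set.mem_iUnion.mpr ⟨⌊u⌋, ?_⟩
        simp only [Set.mem_singleton_iff]
        have h1 : u - (⌊u⌋ : ℝ) = Int.fract u := Int.self_sub_floor u
        rw [hf] at h1
        linarith
      · right
        refine Set.mem_iUnion.mpr ⟨-⌊u⌋, ?_⟩
        have hfr : u + ((-⌊u⌋ : ℤ) : ℝ) = Int.fract u := by
          push_cast
          rw [Int.fract]
          ring
        have hmem : Int.fract u ∈ B ∩ Set.Ioo (0:ℝ) 1 := by
          refine ⟨?_, fract_pos hf, Int.fract_lt_one u⟩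
          rw [hB, Set.mem_setOf_eq]
          rw [hBad, Set.mem_setOf_eq, not_and_or] at hu
          rcases hu with hu | hu
          · exact absurd hf (by simpa using hu)
          · simpa using hu
        refine Set.mem_preimage.mpr ?_
        show u + ((-⌊u⌋ : ℤ) : ℝ) ∈ B ∩ Set.Ioo (0:ℝ) 1
        rw [hfr]
        exact hmem
    refine measure_mono_null hsub (measure_union_null ?_ ?_)
    · exact measure_iUnion_null fun k => measure_singleton _
    · exact measure_iUnion_null fun k => null_preimage_add hBnull _
  have hpull : ∀ᵐ t ∂(volume : Measure ℝ), (t + τ') ∉ Bad :=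
    measure_eq_zero_iff_ae_notMem.mp (null_preimage_add hBadnull τ')
  refine ae_restrict_of_ae ?_
  filter_upwards [hpull] with t ht
  exact not_not.mp ht

end Network

/-- For every `τ ∈ ℝ` the d'Alembert operators satisfy
`C(τ+1) + C(τ-1) = 2·C(1)·C(τ)` as bounded operators on `L²(X¹,m¹)`.  Here
`C : ℝ → B(L²(X¹,m¹))` is the family of (bounded) d'Alembert operators, characterized by
`(C(τ)F)(xy,t) = (F̃(xy,t+τ) + F̃(xy,t-τ))/2` almost everywhere. -/
theorem dAlembert_cosine_functional_equation
    {V : Type} [Countable V] [MeasurableSpace V] [DiscreteMeasurableSpace V]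
    (N : Network V)
    (C : ℝ → (N.L2X →L[ℂ] N.L2X))
    (hC : ∀ σ : ℝ, ∀ F : N.L2X,
      ⇑(C σ F : Lp ℂ 2 N.edgeMeasure) =ᵐ[N.edgeMeasure]
        fun p => N.dAlembertFun (N.edgeFun (F : Lp ℂ 2 N.edgeMeasure)) σ p.1.1 p.1.2 p.2)
    (τ : ℝ) :
    C (τ + 1) + C (τ - 1) = (2:ℂ) • ((C 1).comp (C τ)) := by
  refine ContinuousLinearMap.ext fun F => ?_
  refine Subtype.ext ?_
  refine MeasureTheory.Lp.ext ?_
  have hcoeL : (((C (τ + 1) + C (τ - 1)) F : N.L2X) : Lp ℂ 2 N.edgeMeasure)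
      = ((C (τ + 1) F : N.L2X) : Lp ℂ 2 N.edgeMeasure)
        + ((C (τ - 1) F : N.L2X) : Lp ℂ 2 N.edgeMeasure) := rfl
  have hcoeR : ((((2:ℂ) • ((C 1).comp (C τ))) F : N.L2X) : Lp ℂ 2 N.edgeMeasure)
      = (2:ℂ) • ((C 1 (C τ F) : N.L2X) : Lp ℂ 2 N.edgeMeasure) := rfl
  rw [hcoeL, hcoeR]
  have hadd := Lp.coeFn_add ((C (τ + 1) F : N.L2X) : Lp ℂ 2 N.edgeMeasure)
    ((C (τ - 1) F : N.L2X) : Lp ℂ 2 N.edgeMeasure)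
  have hsmul := Lp.coeFn_smul (2:ℂ) ((C 1 (C τ F) : N.L2X) : Lp ℂ 2 N.edgeMeasure)
  have hCp := hC (τ + 1) F
  have hCm := hC (τ - 1) F
  have hC1 := hC 1 (C τ F)
  have hSτ : N.edgeMeasure {p | ¬ (((C τ F : N.L2X) : Lp ℂ 2 N.edgeMeasure) p
      = N.dAlembertFun (N.edgeFun (F : Lp ℂ 2 N.edgeMeasure)) τ p.1.1 p.1.2 p.2)} = 0 :=
    ae_iff.mp (hC τ F)
  have hgslice : ∀ᵐ t ∂(volume.restrict (Set.Ioo (0:ℝ) 1)),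
      ∀ e : V × V, N.c e.1 e.2 ≠ 0 →
        ((C τ F : N.L2X) : Lp ℂ 2 N.edgeMeasure) (e, t)
          = N.dAlembertFun (N.edgeFun (F : Lp ℂ 2 N.edgeMeasure)) τ e.1 e.2 t := by
    rw [ae_all_iff]
    intro e
    rcases eq_or_ne (N.c e.1 e.2) 0 with he | he
    · exact Filter.Eventually.of_forall fun t h' => absurd he h'
    · filter_upwards [N.comp_ae hSτ e he] with t ht
      intro _
      by_contra hne
      exact ht hne
  have hg1 := N.ae_good_shift (F : Lp ℂ 2 N.edgeMeasure) τ
  have hg2 := N.ae_good_shift (F : Lp ℂ 2 N.edgeMeasure) (-τ)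
  have hmain : ∀ᵐ p ∂N.edgeMeasure,
      (∀ e : V × V, N.c e.1 e.2 ≠ 0 →
        ((C τ F : N.L2X) : Lp ℂ 2 N.edgeMeasure) (e, p.2)
          = N.dAlembertFun (N.edgeFun (F : Lp ℂ 2 N.edgeMeasure)) τ e.1 e.2 p.2) ∧
      (Int.fract (p.2 + τ) ≠ 0 ∧
        N.Wgt (fun a b => (F : Lp ℂ 2 N.edgeMeasure) ((a, b), Int.fract (p.2 + τ))) ≠ ⊤) ∧
      (Int.fract (p.2 + -τ) ≠ 0 ∧
        N.Wgt (fun a b => (F : Lp ℂ 2 N.edgeMeasure) ((a, b), Int.fract (p.2 + -τ))) ≠ ⊤) := by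
    refine N.ae_edge_of_ae_slices fun e he => ?_
    filter_upwards [hgslice, hg1, hg2] with t h1 h2 h3
    exact ⟨h1, h2, h3⟩
  filter_upwards [hCp, hCm, hC1, hmain, N.ae_edge_basic, hadd, hsmul]
    with p hp1 hp2 hp3 hp4 hp5 hp6 hp7
  rw [hp6, hp7]
  simp only [Pi.add_apply, Pi.smul_apply, smul_eq_mul]
  rw [hp1, hp2, hp3]
  have hxy : N.adj p.1.1 p.1.2 := by
    by_contra hn
    exact hp5.1 (N.c_eq_zero _ _ hn)
  have hsub : p.2 - τ = p.2 + -τ := by ring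
  refine N.key_identity (N.edgeFun (F : Lp ℂ 2 N.edgeMeasure))
    (N.edgeFun ((C τ F : N.L2X) : Lp ℂ 2 N.edgeMeasure)) τ hxy hp5.2.1 hp5.2.2
    ?_ hp4.2.1.1 hp4.2.1.2 ?_ ?_
  · intro a b hab
    exact hp4.1 (a, b) hab
  · rw [hsub]
    exact hp4.2.2.1
  · rw [hsub]
    exact hp4.2.2.2
end
end
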